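/- arXiv:1407.5409 — 3 statements merged into one kernel-verified Lean document; each statement's English description precedes it below -/
import Mathlib

section
/- For any finite graph G and any two distinct vertices u, v: M(G,t)·M(G-{u,v},t) - M(G-u,t)·M(G-v,t) = -Σ_{P ∈ P_{u,v}} (-t)^{|P|-1} M(G\P, t)^2, where P_{u,v} is the set of paths in G connecting u and v and |P| denotes the number of vertices of the path P. -/
open scoped Classical
open Finset

/-- Number of matchings with exactly `k` edges in `G`. -/
noncomputable def numMatchings {V : Type*} [Fintype V] (G : SimpleGraph V) (k : ℕ) : ℕ :=
  (G.edgeFinset.powerset.filter (fun M => M.card = k ∧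
    ∀ e ∈ M, ∀ f ∈ M, e ≠ f → ∀ v : V, ¬(v ∈ e ∧ v ∈ f))).card

/-- Matching generating function `M(G,t) = Σ_k m_k(G) t^k`. -/
noncomputable def matchGen {V : Type*} [Fintype V] (G : SimpleGraph V) (t : ℝ) : ℝ :=
  ∑ k ∈ Finset.range (Fintype.card V + 1), (numMatchings G k : ℝ) * t ^ k

/-- Derivative `M'(G,t) = Σ_k k·m_k(G) t^(k-1)`. -/
noncomputable def matchGenDeriv {V : Type*} [Fintype V] (G : SimpleGraph V) (t : ℝ) : ℝ :=
  ∑ k ∈ Finset.range (Fintype.card V + 1), (k : ℝ) * (numMatchings G k : ℝ) * t ^ (k - 1)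

/-- The graph obtained from `G` by deleting all vertices in `S` (kept as isolated
vertices, which does not affect matchings). -/
def deleteVerts {V : Type*} (G : SimpleGraph V) (S : Set V) : SimpleGraph V where
  Adj a b := G.Adj a b ∧ a ∉ S ∧ b ∉ S
  symm := ⟨fun _ _ h => ⟨h.1.symm, h.2.2, h.2.1⟩⟩
  loopless := ⟨fun a h => G.loopless.irrefl a h.1⟩

section Aux
set_option linter.unusedSectionVars false
variable {V : Type*} [Fintype V]

def IsMatchingSet {V : Type*} (M : Finset (Sym2 V)) : Prop :=
  ∀ e ∈ M, ∀ f ∈ M, e ≠ f → ∀ v : V, ¬(v ∈ e ∧ v ∈ f)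

noncomputable def matchings (G : SimpleGraph V) : Finset (Finset (Sym2 V)) :=
  G.edgeFinset.powerset.filter IsMatchingSet

lemma card_le_of_matching {G : SimpleGraph V} {M : Finset (Sym2 V)}
    (hM : M ∈ matchings G) : M.card ≤ Fintype.card V := by
  rw [matchings, mem_filter, mem_powerset] at hM
  have : M.card ≤ (univ : Finset V).card := by
    apply Finset.card_le_card_of_injOn (fun e => (Quot.out e).1)
    · intro _ _; exact mem_univ _
    · intro e he f hf hef
      by_contra hne
      have h2 : (Quot.out e).1 ∈ f := by
        have := Sym2.out_fst_mem f
        simp only at hef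
        rwa [← hef] at this
      exact hM.2 e he f hf hne (Quot.out e).1 ⟨Sym2.out_fst_mem e, h2⟩
  simpa using this

lemma matchGen_eq (G : SimpleGraph V) (t : ℝ) :
    matchGen G t = ∑ M ∈ matchings G, t ^ M.card := by
  have hfib : ∀ k, numMatchings G k = ((matchings G).filter (fun M => M.card = k)).card := by
    intro k
    unfold numMatchings matchings
    congr 1
    ext M
    simp only [mem_filter, mem_powerset, IsMatchingSet]
    tauto
  rw [matchGen]
  rw [← Finset.sum_fiberwise_of_maps_to (g := fun M : Finset (Sym2 V) => M.card)
    (fun M hM => Finset.mem_range.2 (Nat.lt_succ_of_le (card_le_of_matching hM)))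
    (fun M => t ^ M.card)]
  refine Finset.sum_congr rfl fun k _ => ?_
  rw [hfib k, Finset.sum_congr rfl (fun M hM => by rw [(Finset.mem_filter.1 hM).2]),
    Finset.sum_const, nsmul_eq_mul]

lemma dV_adj {G : SimpleGraph V} {S : Set V} {x y : V} :
    (deleteVerts G S).Adj x y ↔ G.Adj x y ∧ x ∉ S ∧ y ∉ S := Iff.rfl

lemma dV_dV {G : SimpleGraph V} {S T : Set V} :
    deleteVerts (deleteVerts G S) T = deleteVerts G (S ∪ T) := by
  ext x y
  simp only [dV_adj, Set.mem_union]
  tauto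

lemma dV_congr {G : SimpleGraph V} {S T : Set V} (h : S = T) :
    deleteVerts G S = deleteVerts G T := by rw [h]

lemma mem_dV_edgeSet {G : SimpleGraph V} {S : Set V} {e : Sym2 V}
    (he : e ∈ (deleteVerts G S).edgeSet) : e ∈ G.edgeSet ∧ ∀ x ∈ e, x ∉ S := by
  induction e using Sym2.ind with
  | _ x y =>
    rw [SimpleGraph.mem_edgeSet] at he
    obtain ⟨h1, h2, h3⟩ := he
    refine ⟨h1, ?_⟩
    intro z hz
    rcases Sym2.mem_iff.1 hz with rfl | rfl <;> assumption

def deleteEdge (G : SimpleGraph V) (a b : V) : SimpleGraph V where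
  Adj x y := G.Adj x y ∧ s(x, y) ≠ s(a, b)
  symm := by
    constructor
    intro x y h
    exact ⟨h.1.symm, fun hh => h.2 (Sym2.eq_swap.trans hh)⟩
  loopless := ⟨fun x h => G.loopless.irrefl x h.1⟩

lemma deleteEdge_le {G : SimpleGraph V} {a b : V} : deleteEdge G a b ≤ G :=
  fun _ _ h => h.1

lemma dV_le {G : SimpleGraph V} {S : Set V} : deleteVerts G S ≤ G :=
  fun _ _ h => h.1

lemma mem_deleteEdge_edgeSet {G : SimpleGraph V} {a b : V} {e : Sym2 V} :
    e ∈ (deleteEdge G a b).edgeSet ↔ e ∈ G.edgeSet ∧ e ≠ s(a, b) := by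
  induction e using Sym2.ind with
  | _ x y => rfl

lemma edgeFinset_deleteEdge (G : SimpleGraph V) (a b : V) :
    (deleteEdge G a b).edgeFinset = G.edgeFinset.erase s(a, b) := by
  ext e
  simp only [SimpleGraph.mem_edgeFinset, Finset.mem_erase, mem_deleteEdge_edgeSet]
  tauto

lemma matchGen_rec {G : SimpleGraph V} {a b : V} (hab : G.Adj a b) (t : ℝ) :
    matchGen G t = matchGen (deleteEdge G a b) t
      + t * matchGen (deleteVerts G {a, b}) t := by
  classical
  rw [matchGen_eq, matchGen_eq, matchGen_eq]
  rw [← Finset.sum_filter_add_sum_filter_not (matchings G) (fun M => s(a,b) ∈ M)]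
  rw [add_comm]
  congr 1
  · -- matchings without the edge = matchings of deleteEdge
    apply Finset.sum_congr _ (fun _ _ => rfl)
    ext M
    simp only [mem_filter, matchings, mem_powerset, edgeFinset_deleteEdge,
      Finset.subset_erase]
    tauto
  · -- matchings containing the edge ↔ matchings of deleteVerts G {a,b}
    rw [Finset.mul_sum]
    apply Finset.sum_nbij' (i := fun M => M.erase s(a,b)) (j := fun N => insert s(a,b) N)
    · intro M hM
      simp only [mem_filter, matchings, mem_powerset] at hM ⊢
      obtain ⟨⟨hsub, hmatch⟩, he⟩ := hM
      refine ⟨?_, ?_⟩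
      · intro f hf
        have hfM := Finset.mem_of_mem_erase hf
        have hfne : f ≠ s(a,b) := Finset.ne_of_mem_erase hf
        rw [SimpleGraph.mem_edgeFinset]
        have hfG : f ∈ G.edgeSet := SimpleGraph.mem_edgeFinset.1 (hsub hfM)
        induction f using Sym2.ind with
        | _ x y =>
          rw [SimpleGraph.mem_edgeSet] at hfG ⊢
          refine ⟨hfG, ?_, ?_⟩
          · intro hx
            rcases Set.mem_insert_iff.1 hx with rfl | hx'
            · exact hmatch _ hfM _ he hfne x ⟨Sym2.mem_mk_left x y, Sym2.mem_mk_left x b⟩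
            · rw [Set.mem_singleton_iff] at hx'
              subst hx'
              exact hmatch _ hfM _ he hfne x ⟨Sym2.mem_mk_left x y, Sym2.mem_mk_right a x⟩
          · intro hy
            rcases Set.mem_insert_iff.1 hy with rfl | hy'
            · exact hmatch _ hfM _ he hfne y ⟨Sym2.mem_mk_right x y, Sym2.mem_mk_left y b⟩
            · rw [Set.mem_singleton_iff] at hy'
              subst hy'
              exact hmatch _ hfM _ he hfne y ⟨Sym2.mem_mk_right x y, Sym2.mem_mk_right a y⟩
      · intro e he' f hf' hne
        exact hmatch e (Finset.mem_of_mem_erase he') f (Finset.mem_of_mem_erase hf') hne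
    · intro N hN
      simp only [mem_filter, matchings, mem_powerset] at hN ⊢
      obtain ⟨hsub, hmatch⟩ := hN
      have hvert : ∀ f ∈ N, ∀ x ∈ f, x ∉ ({a, b} : Set V) := by
        intro f hf x hx
        exact (mem_dV_edgeSet (SimpleGraph.mem_edgeFinset.1 (hsub hf))).2 x hx
      refine ⟨⟨?_, ?_⟩, Finset.mem_insert_self _ _⟩
      · intro f hf
        rcases Finset.mem_insert.1 hf with rfl | hf'
        · rwa [SimpleGraph.mem_edgeFinset, SimpleGraph.mem_edgeSet]
        · exact SimpleGraph.mem_edgeFinset.2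
            (SimpleGraph.edgeSet_mono dV_le (SimpleGraph.mem_edgeFinset.1 (hsub hf')))
      · intro e he' f hf' hne x hx
        rcases Finset.mem_insert.1 he' with rfl | he''
        · rcases Finset.mem_insert.1 hf' with rfl | hf''
          · exact hne rfl
          · have : x ∉ ({a,b} : Set V) := hvert f hf'' x hx.2
            rcases Sym2.mem_iff.1 hx.1 with rfl | rfl
            · exact this (Set.mem_insert _ _)
            · exact this (Set.mem_insert_of_mem _ rfl)
        · rcases Finset.mem_insert.1 hf' with rfl | hf''
          · have : x ∉ ({a,b} : Set V) := hvert e he'' x hx.1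
            rcases Sym2.mem_iff.1 hx.2 with rfl | rfl
            · exact this (Set.mem_insert _ _)
            · exact this (Set.mem_insert_of_mem _ rfl)
          · exact hmatch e he'' f hf'' hne x hx
    · intro M hM
      exact Finset.insert_erase (Finset.mem_filter.1 hM).2
    · intro N hN
      apply Finset.erase_insert
      intro hcon
      simp only [mem_filter, matchings, mem_powerset] at hN
      have := (mem_dV_edgeSet (SimpleGraph.mem_edgeFinset.1 (hN.1 hcon))).2 a
        (Sym2.mem_mk_left a b)
      exact this (Set.mem_insert _ _)
    · intro M hM
      have heM : s(a,b) ∈ M := (Finset.mem_filter.1 hM).2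
      rw [Finset.card_erase_of_mem heM]
      have h1 : 1 ≤ M.card := Finset.card_pos.2 ⟨_, heM⟩
      rw [← pow_succ']
      congr 1
      omega

open SimpleGraph Walk in
lemma support_notMem_of_dV {G : SimpleGraph V} {S : Set V} {x y : V}
    (w : (deleteVerts G S).Walk x y) (hx : x ∉ S) : ∀ z ∈ w.support, z ∉ S := by
  induction w with
  | nil => intro z hz; simp at hz; subst hz; exact hx
  | cons h w ih =>
    intro z hz
    rw [Walk.support_cons, List.mem_cons] at hz
    rcases hz with rfl | hz
    · exact hx
    · exact ih h.2.2 z hz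

open SimpleGraph Walk in
lemma mapLe_transfer {G H : SimpleGraph V} {x y : V} (p : G.Walk x y)
    (hp : ∀ e ∈ p.edges, e ∈ H.edgeSet) (hle : H ≤ G) :
    (p.transfer H hp).mapLe hle = p := by
  induction p with
  | nil => rfl
  | cons h w ih =>
    simp only [Walk.transfer, Walk.mapLe, Walk.map_cons]
    congr 1
    exact congrArg (Walk.cons h) (ih _)

open SimpleGraph Walk in
lemma mem_support_of_mem_edges' {G : SimpleGraph V} {x y z : V} {p : G.Walk x y}
    {e : Sym2 V} (he : e ∈ p.edges) (hz : z ∈ e) : z ∈ p.support := by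
  induction e using Sym2.ind with
  | _ a b =>
    rcases Sym2.mem_iff.1 hz with rfl | rfl
    · exact p.fst_mem_support_of_mem_edges he
    · exact p.snd_mem_support_of_mem_edges he

open SimpleGraph Walk in
lemma support_mapLe {G H : SimpleGraph V} (hle : G ≤ H) {x y : V} (p : G.Walk x y) :
    (p.mapLe hle).support = p.support := by
  rw [Walk.mapLe, Walk.support_map]
  exact List.map_id _

open SimpleGraph in
lemma sum_path_split {G : SimpleGraph V} {u a v : V} (hadj : G.Adj u a) (huv : u ≠ v)
    (f : List V → ℝ) :
    ∑ p : G.Path u v, f p.1.support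
      = (∑ p : (deleteEdge G u a).Path u v, f p.1.support)
        + ∑ q : (deleteVerts G {u}).Path a v, f (u :: q.1.support) := by
  classical
  have hle1 : deleteEdge G u a ≤ G := deleteEdge_le
  have hle2 : deleteVerts G {u} ≤ G := dV_le
  -- the combining map
  have hcons : ∀ q : (deleteVerts G {u}).Path a v,
      ((Walk.cons hadj (q.1.mapLe hle2)) : G.Walk u v).IsPath := by
    intro q
    rw [Walk.cons_isPath_iff]
    constructor
    · exact q.2.mapLe hle2
    · rw [support_mapLe]
      intro hu
      exact support_notMem_of_dV q.1 (fun h => hadj.ne' (Set.mem_singleton_iff.1 h)) u hu rfl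
  let Φ : (deleteEdge G u a).Path u v ⊕ (deleteVerts G {u}).Path a v → G.Path u v :=
    fun x => match x with
    | Sum.inl p => ⟨p.1.mapLe hle1, p.2.mapLe hle1⟩
    | Sum.inr q => ⟨Walk.cons hadj (q.1.mapLe hle2), hcons q⟩
  have hbij : Function.Bijective Φ := by
    constructor
    · have hinj1 : Function.Injective
          (Walk.mapLe hle1 : (deleteEdge G u a).Walk u v → G.Walk u v) :=
        Walk.map_injective_of_injective (fun _ _ h => h) u v
      have hinj2 : Function.Injective
          (Walk.mapLe hle2 : (deleteVerts G {u}).Walk a v → G.Walk a v) :=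
        Walk.map_injective_of_injective (fun _ _ h => h) a v
      rintro (p | q) (p' | q') h
      · simp only [Φ, Subtype.mk.injEq] at h
        exact congrArg Sum.inl (Subtype.ext (hinj1 h))
      · exfalso
        obtain ⟨w, hw⟩ := p
        simp only [Φ, Subtype.mk.injEq] at h
        cases w with
        | nil => exact huv rfl
        | @cons _ b _ h' w' =>
          rw [Walk.mapLe, Walk.map_cons] at h
          injection h with h1 h2 h3 h4
          have hb : b = a := h2
          subst hb
          exact h'.2 rfl
      · exfalso
        obtain ⟨w, hw⟩ := p'
        simp only [Φ, Subtype.mk.injEq] at h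
        replace h := h.symm
        cases w with
        | nil => exact huv rfl
        | @cons _ b _ h' w' =>
          rw [Walk.mapLe, Walk.map_cons] at h
          injection h with h1 h2 h3 h4
          have hb : b = a := h2
          subst hb
          exact h'.2 rfl
      · simp only [Φ, Subtype.mk.injEq] at h
        injection h with h1 h2 h3 h4
        exact congrArg Sum.inr (Subtype.ext (hinj2 h4))
    · intro P
      obtain ⟨w, hw⟩ := P
      cases w with
      | nil => exact absurd rfl huv
      | @cons _ b _ h' q =>
        have hqpath : q.IsPath := hw.of_cons
        have hunot : u ∉ q.support := ((Walk.cons_isPath_iff h' q).1 hw).2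
        by_cases hb : b = a
        · subst hb
          have hq : ∀ e ∈ q.edges, e ∈ (deleteVerts G {u}).edgeSet := by
            intro e he
            have heG : e ∈ G.edgeSet := q.edges_subset_edgeSet he
            induction e using Sym2.ind with
            | _ x y =>
              rw [SimpleGraph.mem_edgeSet] at heG ⊢
              refine ⟨heG, ?_, ?_⟩
              · intro hx
                rw [Set.mem_singleton_iff] at hx; subst hx
                exact hunot (mem_support_of_mem_edges' he (Sym2.mem_mk_left _ _))
              · intro hy
                rw [Set.mem_singleton_iff] at hy; subst hy
                exact hunot (mem_support_of_mem_edges' he (Sym2.mem_mk_right _ _))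
          refine ⟨Sum.inr ⟨q.transfer _ hq, hqpath.transfer hq⟩, ?_⟩
          apply Subtype.ext
          show Walk.cons hadj (Walk.mapLe hle2 (q.transfer _ hq)) = Walk.cons h' q
          rw [mapLe_transfer]
        · have hP : ∀ e ∈ (Walk.cons h' q).edges, e ∈ (deleteEdge G u a).edgeSet := by
            intro e he
            have heG : e ∈ G.edgeSet := (Walk.cons h' q).edges_subset_edgeSet he
            rw [mem_deleteEdge_edgeSet]
            refine ⟨heG, ?_⟩
            rintro rfl
            rw [Walk.edges_cons, List.mem_cons] at he
            rcases he with he | he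
            · rw [Sym2.eq_iff] at he
              rcases he with ⟨-, h2⟩ | ⟨-, h2⟩
              · exact hb h2.symm
              · exact hadj.ne h2.symm
            · exact hunot (q.fst_mem_support_of_mem_edges he)
          refine ⟨Sum.inl ⟨(Walk.cons h' q).transfer _ hP, hw.transfer hP⟩, ?_⟩
          apply Subtype.ext
          show Walk.mapLe hle1 ((Walk.cons h' q).transfer _ hP) = Walk.cons h' q
          rw [mapLe_transfer]
  rw [← Fintype.sum_bijective Φ hbij _ _ (fun x => rfl)]
  rw [Fintype.sum_sum_type]
  congr 1
  · exact Finset.sum_congr rfl fun p _ => by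
      simp only [Φ]
      rw [support_mapLe]
  · exact Finset.sum_congr rfl fun q _ => by
      simp only [Φ]
      rw [Walk.support_cons, support_mapLe]

lemma dV_deleteEdge {G : SimpleGraph V} {u a : V} {S : Set V} (hS : u ∈ S ∨ a ∈ S) :
    deleteVerts G S = deleteVerts (deleteEdge G u a) S := by
  ext x y
  simp only [dV_adj]
  constructor
  · rintro ⟨h1, h2, h3⟩
    refine ⟨⟨h1, ?_⟩, h2, h3⟩
    intro hcon
    rw [Sym2.eq_iff] at hcon
    rcases hS with hS | hS
    · rcases hcon with ⟨rfl, -⟩ | ⟨-, rfl⟩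
      · exact h2 hS
      · exact h3 hS
    · rcases hcon with ⟨-, rfl⟩ | ⟨rfl, -⟩
      · exact h3 hS
      · exact h2 hS
  · rintro ⟨h1, h2, h3⟩
    exact ⟨h1.1, h2, h3⟩

lemma deleteEdge_dV {G : SimpleGraph V} {u a : V} {S : Set V} :
    deleteEdge (deleteVerts G S) u a = deleteVerts (deleteEdge G u a) S := by
  ext x y
  show ((deleteVerts G S).Adj x y ∧ _) ↔ _
  simp only [dV_adj]
  show _ ↔ ((G.Adj x y ∧ _) ∧ _ ∧ _)
  tauto

lemma isolated_case {G : SimpleGraph V} {u v : V} (huv : u ≠ v) (t : ℝ)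
    (hiso : ∀ a, ¬ G.Adj u a) :
    matchGen G t * matchGen (deleteVerts G {u, v}) t -
        matchGen (deleteVerts G {u}) t * matchGen (deleteVerts G {v}) t =
      -∑ p : G.Path u v,
        (-t) ^ (p.1.support.length - 1) *
          (matchGen (deleteVerts G {x | x ∈ p.1.support}) t) ^ 2 := by
  classical
  have h1 : deleteVerts G {u} = G := by
    ext x y
    simp only [dV_adj, Set.mem_singleton_iff]
    constructor
    · exact fun h => h.1
    · intro h
      refine ⟨h, ?_, ?_⟩
      · rintro rfl; exact hiso y h
      · rintro rfl; exact hiso x h.symm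
  have h2 : deleteVerts G {u, v} = deleteVerts G {v} := by
    ext x y
    simp only [dV_adj, Set.mem_insert_iff, Set.mem_singleton_iff]
    constructor
    · rintro ⟨ha, hx, hy⟩
      exact ⟨ha, fun h => hx (Or.inr h), fun h => hy (Or.inr h)⟩
    · rintro ⟨ha, hx, hy⟩
      refine ⟨ha, ?_, ?_⟩
      · rintro (rfl | h)
        · exact hiso y ha
        · exact hx h
      · rintro (rfl | h)
        · exact hiso x ha.symm
        · exact hy h
  have hempty : IsEmpty (G.Path u v) := by
    constructor
    intro p
    obtain ⟨w, hw⟩ := p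
    cases w with
    | nil => exact huv rfl
    | cons h q => exact hiso _ h
  rw [h1, h2]
  rw [Finset.univ_eq_empty, Finset.sum_empty, neg_zero, sub_self]

theorem key : ∀ (n : ℕ) (G : SimpleGraph V), G.edgeFinset.card ≤ n →
    ∀ u v : V, u ≠ v → ∀ t : ℝ,
    matchGen G t * matchGen (deleteVerts G {u, v}) t -
        matchGen (deleteVerts G {u}) t * matchGen (deleteVerts G {v}) t =
      -∑ p : G.Path u v,
        (-t) ^ (p.1.support.length - 1) *
          (matchGen (deleteVerts G {x | x ∈ p.1.support}) t) ^ 2 := by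
  intro n
  induction n with
  | zero =>
    intro G hG u v huv t
    apply isolated_case huv
    intro a hadj
    have : s(u, a) ∈ G.edgeFinset := SimpleGraph.mem_edgeFinset.2 hadj
    have := Finset.card_pos.2 ⟨_, this⟩
    omega
  | succ n ih =>
    intro G hG u v huv t
    by_cases hex : ∃ a, G.Adj u a
    swap
    · push_neg at hex
      exact isolated_case huv t hex
    obtain ⟨a, ha⟩ := hex
    set G' := deleteEdge G u a with hG'def
    set H := deleteVerts G {u} with hHdef
    -- cardinality bounds
    have hmem : s(u, a) ∈ G.edgeFinset := SimpleGraph.mem_edgeFinset.2 ha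
    have hcardG' : G'.edgeFinset.card ≤ n := by
      rw [hG'def, edgeFinset_deleteEdge, Finset.card_erase_of_mem hmem]
      omega
    have hcardH : H.edgeFinset.card ≤ n := by
      have hsub : H.edgeFinset ⊆ G.edgeFinset.erase s(u, a) := by
        intro e he
        rw [SimpleGraph.mem_edgeFinset] at he
        obtain ⟨heG, hever⟩ := mem_dV_edgeSet he
        rw [Finset.mem_erase]
        refine ⟨?_, SimpleGraph.mem_edgeFinset.2 heG⟩
        rintro rfl
        exact hever u (Sym2.mem_mk_left u a) rfl
      have := Finset.card_le_card hsub
      rw [Finset.card_erase_of_mem hmem] at this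
      omega
    -- split the path sum
    have hsplit := sum_path_split (G := G) ha huv
      (fun L => (-t) ^ (L.length - 1) * (matchGen (deleteVerts G {x | x ∈ L}) t) ^ 2)
    rw [hsplit]
    -- S1 : the G' sum
    have ihG' := ih G' hcardG' u v huv t
    have hS1 : (∑ p : G'.Path u v, (-t) ^ (p.1.support.length - 1) *
          (matchGen (deleteVerts G {x | x ∈ p.1.support}) t) ^ 2)
        = -(matchGen G' t * matchGen (deleteVerts G' {u, v}) t -
            matchGen (deleteVerts G' {u}) t * matchGen (deleteVerts G' {v}) t) := by
      rw [ihG', neg_neg]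
      refine Finset.sum_congr rfl fun p _ => ?_
      have hgr : deleteVerts G {x | x ∈ p.1.support}
          = deleteVerts G' {x | x ∈ p.1.support} :=
        dV_deleteEdge (Or.inl (p.1.start_mem_support))
      rw [hgr]
    -- S2 : the H sum
    set Sq := ∑ q : H.Path a v, (-t) ^ (q.1.support.length - 1) *
        (matchGen (deleteVerts H {x | x ∈ q.1.support}) t) ^ 2 with hSqdef
    have hS2 : (∑ q : H.Path a v, (-t) ^ ((u :: q.1.support).length - 1) *
          (matchGen (deleteVerts G {x | x ∈ u :: q.1.support}) t) ^ 2)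
        = (-t) * Sq := by
      rw [hSqdef, Finset.mul_sum]
      refine Finset.sum_congr rfl fun q _ => ?_
      have hset : {x | x ∈ u :: q.1.support} = {u} ∪ {x | x ∈ q.1.support} := by
        ext x
        simp [List.mem_cons]
      have hgr : deleteVerts G {x | x ∈ u :: q.1.support}
          = deleteVerts H {x | x ∈ q.1.support} := by
        rw [hset]
        exact dV_dV.symm
      rw [hgr]
      have hlen : q.1.support.length = q.1.length + 1 := q.1.length_support
      have hlen2 : (u :: q.1.support).length - 1 = q.1.length + 1 := by
        simp [hlen]
      rw [hlen2, hlen]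
      simp only [Nat.add_sub_cancel]
      rw [pow_succ']
      ring
    rw [hS1, hS2]
    -- bridges (graph equalities)
    have dV_pair : ∀ (W : SimpleGraph V) (x y : V),
        deleteVerts W {x, y} = deleteVerts (deleteVerts W {x}) {y} := by
      intro W x y
      rw [← Set.singleton_union]
      exact dV_dV.symm
    have gE : deleteVerts (deleteEdge G u a) {u} = deleteVerts G {u} :=
      (dV_deleteEdge (G:=G) (u:=u) (a:=a) (S:={u}) (Or.inl rfl)).symm
    have gD : deleteVerts (deleteEdge G u a) {u, v} = deleteVerts (deleteVerts G {u}) {v} :=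
      (dV_deleteEdge (G:=G) (u:=u) (a:=a) (S:={u,v}) (Or.inl (Set.mem_insert _ _))).symm.trans (dV_pair G u v)
    have bD : matchGen (deleteVerts G' {u, v}) t = matchGen (deleteVerts H {v}) t :=
      congrArg (fun W => matchGen W t) gD
    have bE : matchGen (deleteVerts G' {u}) t = matchGen H t :=
      congrArg (fun W => matchGen W t) gE
    have bC : matchGen (deleteVerts G {u, a}) t = matchGen (deleteVerts H {a}) t :=
      congrArg (fun W => matchGen W t) (dV_pair G u a)
    have bDg : matchGen (deleteVerts G {u, v}) t = matchGen (deleteVerts H {v}) t :=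
      congrArg (fun W => matchGen W t) (dV_pair G u v)
    -- recurrence for G
    have h1 : matchGen G t = matchGen G' t + t * matchGen (deleteVerts H {a}) t := by
      rw [← bC]
      exact matchGen_rec ha t
    rw [h1, bDg, bD, bE]
    by_cases hav : a = v
    · -- a = v
      subst hav
      have bF : matchGen (deleteVerts G {a}) t = matchGen (deleteVerts G' {a}) t :=
        congrArg (fun W => matchGen W t)
          (dV_deleteEdge (G:=G) (u:=u) (a:=a) (S:={a}) (Or.inr rfl))
      have hSq : Sq = (matchGen (deleteVerts H {a}) t) ^ 2 := by
        haveI : Unique (H.Path a a) := ⟨⟨SimpleGraph.Path.nil⟩, fun p => p.loop_eq⟩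
        rw [hSqdef, Fintype.sum_unique]
        rw [show (default : H.Path a a) = SimpleGraph.Path.nil from
          SimpleGraph.Path.loop_eq _]
        have hsupp : ((SimpleGraph.Path.nil : H.Path a a) : H.Walk a a).support = [a] := rfl
        rw [hsupp]
        have hss : {x | x ∈ [a]} = ({a} : Set V) := by ext x; simp
        rw [hss]
        simp
      rw [hSq, bF]
      ring
    · -- a ≠ v
      have ihH := ih H hcardH a v hav t
      rw [← hSqdef] at ihH
      have hadjv : (deleteVerts G {v}).Adj u a := ⟨ha, huv, hav⟩
      have h2 : matchGen (deleteVerts G {v}) t = matchGen (deleteVerts G' {v}) t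
          + t * matchGen (deleteVerts H {a, v}) t := by
        have e2 : deleteEdge (deleteVerts G {v}) u a = deleteVerts (deleteEdge G u a) {v} :=
          deleteEdge_dV
        have hKeq : deleteVerts (deleteVerts G {v}) {u, a} = deleteVerts H {a, v} := by
          rw [dV_dV]
          show _ = deleteVerts (deleteVerts G {u}) {a, v}
          rw [dV_dV]
          apply dV_congr
          ext x
          simp only [Set.mem_union, Set.mem_insert_iff, Set.mem_singleton_iff]
          tauto
        calc matchGen (deleteVerts G {v}) t
            = matchGen (deleteEdge (deleteVerts G {v}) u a) t
              + t * matchGen (deleteVerts (deleteVerts G {v}) {u, a}) t :=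
              matchGen_rec hadjv t
          _ = _ := by rw [e2, hKeq]
      rw [h2]
      linear_combination (-t) * ihH

end Aux

theorem stmt2 {V : Type*} [Fintype V] (G : SimpleGraph V) (u v : V) (huv : u ≠ v) (t : ℝ) :
    matchGen G t * matchGen (deleteVerts G {u, v}) t -
        matchGen (deleteVerts G {u}) t * matchGen (deleteVerts G {v}) t =
      -∑ p : G.Path u v,
        (-t) ^ (p.1.support.length - 1) *
          (matchGen (deleteVerts G {x | x ∈ p.1.support}) t) ^ 2 := by
  exact key G.edgeFinset.card G le_rfl u v huv t
end

section
/- Let G = (A,B,E) be a d-regular bipartite graph such that the automorphism group of G acts transitively on A and transitively on B. Then M(G-u,t) = M(G-v,t) for all vertices u, v of G. -/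
open scoped Classical
open Finset

/-! ### Auxiliary definitions and lemmas -/

/-- The finset of matchings with exactly `k` edges. -/
noncomputable def matchFinset {V : Type*} [Fintype V] (G : SimpleGraph V) (k : ℕ) :
    Finset (Finset (Sym2 V)) :=
  G.edgeFinset.powerset.filter (fun M => M.card = k ∧
    ∀ e ∈ M, ∀ f ∈ M, e ≠ f → ∀ v : V, ¬(v ∈ e ∧ v ∈ f))

lemma numMatchings_eq {V : Type*} [Fintype V] (G : SimpleGraph V) (k : ℕ) :
    numMatchings G k = (matchFinset G k).card := rfl

/-- `numMatchings` is invariant under graph isomorphism. -/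
lemma numMatchings_iso {V : Type*} [Fintype V] {G H : SimpleGraph V} (φ : G ≃g H) (k : ℕ) :
    numMatchings G k = numMatchings H k := by
  classical
  apply Finset.card_bij (fun M _ => M.image (Sym2.map φ))
  · intro M hM
    simp only [Finset.mem_filter, Finset.mem_powerset] at hM ⊢
    obtain ⟨hsub, hcard, hmatch⟩ := hM
    refine ⟨?_, ?_, ?_⟩
    · intro e he
      simp only [Finset.mem_image] at he
      obtain ⟨f, hf, rfl⟩ := he
      have := hsub hf
      rw [SimpleGraph.mem_edgeFinset] at this ⊢
      exact φ.map_mem_edgeSet_iff.mpr this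
    · rw [Finset.card_image_of_injective _ (Sym2.map.injective φ.injective), hcard]
    · intro e he f hf hne v hv
      simp only [Finset.mem_image] at he hf
      obtain ⟨e', he', rfl⟩ := he
      obtain ⟨f', hf', rfl⟩ := hf
      obtain ⟨hv1, hv2⟩ := hv
      rw [Sym2.mem_map] at hv1 hv2
      obtain ⟨a, ha, hav⟩ := hv1
      obtain ⟨b, hb, hbv⟩ := hv2
      have hab : a = b := φ.injective (hav.trans hbv.symm)
      subst hab
      have hne' : e' ≠ f' := fun h => hne (by rw [h])
      exact hmatch e' he' f' hf' hne' a ⟨ha, hb⟩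
  · intro M hM N hN h
    exact Finset.image_injective (Sym2.map.injective φ.injective) h
  · intro N hN
    refine ⟨N.image (Sym2.map φ.symm), ?_, ?_⟩
    · simp only [Finset.mem_filter, Finset.mem_powerset] at hN ⊢
      obtain ⟨hsub, hcard, hmatch⟩ := hN
      refine ⟨?_, ?_, ?_⟩
      · intro e he
        simp only [Finset.mem_image] at he
        obtain ⟨f, hf, rfl⟩ := he
        have := hsub hf
        rw [SimpleGraph.mem_edgeFinset] at this ⊢
        exact φ.symm.map_mem_edgeSet_iff.mpr this
      · rw [Finset.card_image_of_injective _ (Sym2.map.injective φ.symm.injective), hcard]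
      · intro e he f hf hne v hv
        simp only [Finset.mem_image] at he hf
        obtain ⟨e', he', rfl⟩ := he
        obtain ⟨f', hf', rfl⟩ := hf
        obtain ⟨hv1, hv2⟩ := hv
        rw [Sym2.mem_map] at hv1 hv2
        obtain ⟨a, ha, hav⟩ := hv1
        obtain ⟨b, hb, hbv⟩ := hv2
        have hab : a = b := φ.symm.injective (hav.trans hbv.symm)
        subst hab
        exact hmatch e' he' f' hf' (fun h => hne (by rw [h])) a ⟨ha, hb⟩
    · rw [Finset.image_image]
      have : Sym2.map φ ∘ Sym2.map φ.symm = id := by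
        funext e
        rw [Function.comp_apply, Sym2.map_map]
        have : ⇑φ ∘ ⇑φ.symm = id := by funext x; exact φ.apply_symm_apply x
        rw [this, Sym2.map_id, id]
      rw [this, Finset.image_id]

/-- An automorphism mapping `u` to `u'` induces an iso of vertex-deleted graphs. -/
def delIso {V : Type*} (G : SimpleGraph V) (φ : G ≃g G) (u u' : V) (h : φ u = u') :
    deleteVerts G {u} ≃g deleteVerts G {u'} where
  toEquiv := φ.toEquiv
  map_rel_iff' := by
    intro a b
    simp only [deleteVerts, Equiv.coe_fn_mk, Set.mem_singleton_iff]
    constructor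
    · rintro ⟨hadj, ha, hb⟩
      exact ⟨φ.map_rel_iff.mp hadj,
        fun h' => ha (by rw [h']; exact h),
        fun h' => hb (by rw [h']; exact h)⟩
    · rintro ⟨hadj, ha, hb⟩
      exact ⟨φ.map_rel_iff.mpr hadj,
        fun h' => ha (φ.injective (by rw [h', h] : φ.toEquiv a = φ u)),
        fun h' => hb (φ.injective (by rw [h', h] : φ.toEquiv b = φ u))⟩

lemma mem_edgeFinset_deleteVerts {V : Type*} [Fintype V] (G : SimpleGraph V) (u : V)
    (e : Sym2 V) : e ∈ (deleteVerts G {u}).edgeFinset ↔ e ∈ G.edgeFinset ∧ u ∉ e := by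
  induction e using Sym2.ind with
  | _ x y =>
    rw [SimpleGraph.mem_edgeFinset, SimpleGraph.mem_edgeFinset]
    simp only [SimpleGraph.mem_edgeFinset, SimpleGraph.mem_edgeSet, Sym2.mem_iff,
      deleteVerts, Set.mem_singleton_iff]
    constructor
    · rintro ⟨hadj, hx, hy⟩
      exact ⟨hadj, by rintro (rfl|rfl) <;> simp_all⟩
    · rintro ⟨hadj, h⟩
      push_neg at h
      exact ⟨hadj, fun h' => h.1 h'.symm, fun h' => h.2 h'.symm⟩

lemma matchFinset_deleteVerts {V : Type*} [Fintype V] (G : SimpleGraph V) (u : V) (k : ℕ) :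
    matchFinset (deleteVerts G {u}) k
      = (matchFinset G k).filter (fun M => ∀ e ∈ M, u ∉ e) := by
  ext M
  simp only [matchFinset, Finset.mem_filter, Finset.mem_powerset]
  constructor
  · rintro ⟨hsub, hcard, hmatch⟩
    have h1 : ∀ e ∈ M, e ∈ G.edgeFinset ∧ u ∉ e := fun e he =>
      (mem_edgeFinset_deleteVerts G u e).mp (hsub he)
    exact ⟨⟨fun e he => (h1 e he).1, hcard, hmatch⟩, fun e he => (h1 e he).2⟩
  · rintro ⟨⟨hsub, hcard, hmatch⟩, hu⟩
    exact ⟨fun e he => (mem_edgeFinset_deleteVerts G u e).mpr ⟨hsub he, hu e he⟩,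
      hcard, hmatch⟩

section Bip
variable {V : Type*} [Fintype V] {G : SimpleGraph V} {A B : Finset V} {d : ℕ}
  (hcover : A ∪ B = Finset.univ) (hdisj : Disjoint A B)
  (hedges : ∀ a b : V, G.Adj a b → (a ∈ A ↔ b ∈ B))

include hcover hdisj hedges in
lemma bip_end {e : Sym2 V} (he : e ∈ G.edgeFinset) : ∃! a, a ∈ A ∧ a ∈ e := by
  rw [SimpleGraph.mem_edgeFinset] at he
  induction e using Sym2.ind with
  | _ x y =>
    have hadj : G.Adj x y := he
    have hBnA : ∀ z ∈ B, z ∉ A := fun z hz h => Finset.disjoint_left.mp hdisj h hz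
    by_cases hx : x ∈ A
    · have hy : y ∈ B := (hedges x y hadj).mp hx
      refine ⟨x, ⟨hx, Sym2.mem_mk_left x y⟩, ?_⟩
      rintro a ⟨haA, hae⟩
      rcases Sym2.mem_iff.mp hae with rfl | rfl
      · rfl
      · exact absurd haA (hBnA a hy)
    · have hxB : x ∈ B := by
        have := Finset.mem_union.mp (hcover ▸ Finset.mem_univ x)
        tauto
      have hy : y ∈ A := (hedges y x hadj.symm).mpr hxB
      refine ⟨y, ⟨hy, Sym2.mem_mk_right x y⟩, ?_⟩
      rintro a ⟨haA, hae⟩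
      rcases Sym2.mem_iff.mp hae with rfl | rfl
      · exact absurd haA hx
      · rfl

include hcover hdisj hedges in
lemma covered_card {k : ℕ} {M : Finset (Sym2 V)} (hM : M ∈ matchFinset G k) :
    (A.filter (fun a => ∃ e ∈ M, a ∈ e)).card = k := by
  rw [matchFinset, Finset.mem_filter, Finset.mem_powerset] at hM
  obtain ⟨hsub, hcard, hmatch⟩ := hM
  rw [← hcard]
  have key : ∀ a ∈ A.filter (fun a => ∃ e ∈ M, a ∈ e), ∃ e ∈ M, a ∈ e := by
    intro a ha; exact (Finset.mem_filter.mp ha).2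
  apply Finset.card_bij (fun a ha => (key a ha).choose)
  · intro a ha; exact (key a ha).choose_spec.1
  · intro a ha b hb hab
    have h1 := (key a ha).choose_spec
    have h2 := (key b hb).choose_spec
    obtain ⟨u, hu, huniq⟩ := bip_end hcover hdisj hedges (hsub h1.1)
    have haA : a ∈ A := (Finset.mem_filter.mp ha).1
    have hbA : b ∈ A := (Finset.mem_filter.mp hb).1
    rw [huniq a ⟨haA, h1.2⟩, huniq b ⟨hbA, by rw [hab]; exact h2.2⟩]
  · intro e he
    obtain ⟨u, ⟨huA, hue⟩, _⟩ := bip_end hcover hdisj hedges (hsub he)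
    have hu' : u ∈ A.filter (fun a => ∃ e ∈ M, a ∈ e) :=
      Finset.mem_filter.mpr ⟨huA, e, he, hue⟩
    refine ⟨u, hu', ?_⟩
    have h1 := (key u hu').choose_spec
    by_contra hne
    exact hmatch _ h1.1 e he hne u ⟨h1.2, hue⟩

include hcover hdisj hedges in
lemma uncovered_card {k : ℕ} {M : Finset (Sym2 V)} (hM : M ∈ matchFinset G k) :
    (A.filter (fun a => ∀ e ∈ M, a ∉ e)).card = A.card - k := by
  have h1 := covered_card hcover hdisj hedges hM
  have h2 := Finset.card_filter_add_card_filter_not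
    (s := A) (p := fun a => ∃ e ∈ M, a ∈ e)
  have h3 : A.filter (fun a => ¬ ∃ e ∈ M, a ∈ e) = A.filter (fun a => ∀ e ∈ M, a ∉ e) := by
    apply Finset.filter_congr; intro a _; push_neg; rfl
  rw [h1, h3] at h2
  omega

include hcover hdisj hedges in
lemma sum_numMatchings_delete {k : ℕ} :
    ∑ u ∈ A, numMatchings (deleteVerts G {u}) k
      = (matchFinset G k).card * (A.card - k) := by
  have : ∀ u ∈ A, numMatchings (deleteVerts G {u}) k
      = ∑ M ∈ matchFinset G k, (if ∀ e ∈ M, u ∉ e then 1 else 0) := by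
    intro u _
    rw [numMatchings_eq, matchFinset_deleteVerts, Finset.card_filter]
  rw [Finset.sum_congr rfl this, Finset.sum_comm]
  rw [Finset.sum_congr rfl (fun M hM => ?_), Finset.sum_const, smul_eq_mul]
  rw [← Finset.card_filter]
  exact uncovered_card hcover hdisj hedges hM

include hcover hdisj hedges in
omit hdisj in
lemma card_A_eq_card_B (hreg : G.IsRegularOfDegree d) (hd : 1 ≤ d) : A.card = B.card := by
  classical
  set P : Finset (V × V) :=
    Finset.univ.filter (fun p : V × V => G.Adj p.1 p.2 ∧ p.1 ∈ A) with hP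
  have h1 : P.card = ∑ a ∈ A, d := by
    rw [Finset.card_eq_sum_card_fiberwise
      (f := Prod.fst) (t := A) (fun p hp => (Finset.mem_filter.mp hp).2.2)]
    apply Finset.sum_congr rfl
    intro a ha
    have : P.filter (fun p => p.1 = a) = {a} ×ˢ G.neighborFinset a := by
      ext p
      simp only [hP, Finset.mem_filter, Finset.mem_univ, true_and, Finset.mem_product,
        Finset.mem_singleton, SimpleGraph.mem_neighborFinset]
      constructor
      · rintro ⟨⟨hadj, _⟩, rfl⟩; exact ⟨rfl, hadj⟩
      · rintro ⟨rfl, hadj⟩; exact ⟨⟨hadj, ha⟩, rfl⟩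
    rw [this, Finset.card_product, Finset.card_singleton, one_mul]
    exact hreg a
  have h2 : P.card = ∑ b ∈ B, d := by
    rw [Finset.card_eq_sum_card_fiberwise
      (f := Prod.snd) (t := B)
      (fun p hp => by
        have := (Finset.mem_filter.mp hp).2
        exact (hedges p.1 p.2 this.1).mp this.2)]
    apply Finset.sum_congr rfl
    intro b hb
    have : P.filter (fun p => p.2 = b) = G.neighborFinset b ×ˢ {b} := by
      ext p
      simp only [hP, Finset.mem_filter, Finset.mem_univ, true_and, Finset.mem_product,
        Finset.mem_singleton, SimpleGraph.mem_neighborFinset]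
      constructor
      · rintro ⟨⟨hadj, _⟩, rfl⟩; exact ⟨hadj.symm, rfl⟩
      · rintro ⟨hadj, rfl⟩; exact ⟨⟨hadj.symm, (hedges p.1 p.2 hadj.symm).mpr hb⟩, rfl⟩
    rw [this, Finset.card_product, Finset.card_singleton, mul_one]
    exact hreg b
  rw [Finset.sum_const, smul_eq_mul] at h1
  rw [Finset.sum_const, smul_eq_mul] at h2
  exact Nat.eq_of_mul_eq_mul_right hd (h1.symm.trans h2)

end Bip

theorem stmt4 {V : Type*} [Fintype V] (G : SimpleGraph V) (d : ℕ) (A B : Finset V)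
    (hcover : A ∪ B = Finset.univ) (hdisj : Disjoint A B)
    (hedges : ∀ a b : V, G.Adj a b → (a ∈ A ↔ b ∈ B))
    (hreg : G.IsRegularOfDegree d)
    (hA : ∀ u ∈ A, ∀ u' ∈ A, ∃ φ : G ≃g G, φ u = u')
    (hB : ∀ v ∈ B, ∀ v' ∈ B, ∃ φ : G ≃g G, φ v = v') :
    ∀ u v : V, ∀ t : ℝ, matchGen (deleteVerts G {u}) t = matchGen (deleteVerts G {v}) t := by
  classical
  -- reduce to equality of all matching numbers
  suffices h : ∀ u v : V, ∀ k : ℕ,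
      numMatchings (deleteVerts G {u}) k = numMatchings (deleteVerts G {v}) k by
    intro u v t
    unfold matchGen
    exact Finset.sum_congr rfl (fun k _ => by rw [h u v k])
  -- equality within A and within B via automorphisms
  have hAeq : ∀ u ∈ A, ∀ u' ∈ A, ∀ k,
      numMatchings (deleteVerts G {u}) k = numMatchings (deleteVerts G {u'}) k := by
    intro u hu u' hu' k
    obtain ⟨φ, hφ⟩ := hA u hu u' hu'
    exact numMatchings_iso (delIso G φ u u' hφ) k
  have hBeq : ∀ v ∈ B, ∀ v' ∈ B, ∀ k,
      numMatchings (deleteVerts G {v}) k = numMatchings (deleteVerts G {v'}) k := by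
    intro v hv v' hv' k
    obtain ⟨φ, hφ⟩ := hB v hv v' hv'
    exact numMatchings_iso (delIso G φ v v' hφ) k
  -- the hedges hypothesis for the "swapped" bipartition (B, A)
  have hedges' : ∀ a b : V, G.Adj a b → (a ∈ B ↔ b ∈ A) := by
    intro a b hadj
    have h1 := hedges a b hadj
    have h2 := hedges b a hadj.symm
    have hac := Finset.mem_union.mp (hcover ▸ Finset.mem_univ a)
    have hbc := Finset.mem_union.mp (hcover ▸ Finset.mem_univ b)
    have hda := Finset.disjoint_left.mp hdisj
    constructor
    · intro haB
      rcases hbc with hbA | hbB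
      · exact hbA
      · exact absurd ((h2.mpr haB)) (fun h => hda h hbB)
    · intro hbA
      rcases hac with haA | haB
      · exact absurd (h1.mp haA) (fun h => hda hbA h)
      · exact haB
  -- cross case: u ∈ A, v ∈ B
  have hcross : ∀ u ∈ A, ∀ v ∈ B, ∀ k,
      numMatchings (deleteVerts G {u}) k = numMatchings (deleteVerts G {v}) k := by
    intro u hu v hv k
    by_cases hE : G.edgeFinset = ∅
    · -- edgeless: both deleted graphs have the same (empty) edge set
      have hdel : ∀ w : V, (deleteVerts G {w}).edgeFinset = ∅ := by
        intro w
        ext e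
        simp only [mem_edgeFinset_deleteVerts, hE, Finset.notMem_empty, false_and,
          iff_false, not_false_iff]
      unfold numMatchings
      rw [hdel u, hdel v]
    · -- there is an edge, so d ≥ 1 and |A| = |B|
      obtain ⟨e, he⟩ := Finset.nonempty_iff_ne_empty.mpr hE
      have hd : 1 ≤ d := by
        rw [SimpleGraph.mem_edgeFinset] at he
        induction e using Sym2.ind with
        | _ x y =>
          have : G.Adj x y := he
          have : y ∈ G.neighborFinset x := (SimpleGraph.mem_neighborFinset G x y).mpr this
          have hpos : 0 < G.degree x := by
            rw [← SimpleGraph.card_neighborFinset_eq_degree]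
            exact Finset.card_pos.mpr ⟨y, this⟩
          rw [hreg x] at hpos
          omega
      have hAB : A.card = B.card := card_A_eq_card_B hcover hedges hreg hd
      -- sum identity over A
      have hsumA := sum_numMatchings_delete hcover hdisj hedges (k := k)
      have hsumB := sum_numMatchings_delete (A := B) (B := A)
        (by rw [Finset.union_comm]; exact hcover) hdisj.symm hedges' (k := k)
      have hconstA : ∑ u' ∈ A, numMatchings (deleteVerts G {u'}) k
          = A.card * numMatchings (deleteVerts G {u}) k := by
        rw [Finset.sum_congr rfl (fun u' hu' => (hAeq u' hu' u hu k)), Finset.sum_const,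
          smul_eq_mul]
      have hconstB : ∑ v' ∈ B, numMatchings (deleteVerts G {v'}) k
          = B.card * numMatchings (deleteVerts G {v}) k := by
        rw [Finset.sum_congr rfl (fun v' hv' => (hBeq v' hv' v hv k)), Finset.sum_const,
          smul_eq_mul]
      rw [hconstA] at hsumA
      rw [hconstB] at hsumB
      have hApos : 0 < A.card := Finset.card_pos.mpr ⟨u, hu⟩
      apply Nat.eq_of_mul_eq_mul_left hApos
      rw [hsumA, hAB, hsumB]
  -- combine the cases
  intro u v k
  have hu := Finset.mem_union.mp (hcover ▸ Finset.mem_univ u)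
  have hv := Finset.mem_union.mp (hcover ▸ Finset.mem_univ v)
  rcases hu with hu | hu <;> rcases hv with hv | hv
  · exact hAeq u hu v hv k
  · exact hcross u hu v hv k
  · exact (hcross v hv u hu k).symm
  · exact hBeq u hu v hv k
end

section
/- Let G be a d-regular bipartite graph on 2n vertices with an edge e = (u,v), and let p(e) = m_{n-1}(G-{u,v})/m_n(G) be the probability that a uniform random perfect matching contains e (assume m_n(G) > 0). Then there exists a d-regular bipartite graph G* on 2(dn+1) vertices with s(G*) ≥ (1/(d(dn+1)))·(1/p(e) - 1), where s(H) = m_{m-1}(H)/(m·m_m(H)) for a graph H on 2m vertices. -/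
open scoped Classical
open Finset

set_option linter.unusedSectionVars false
set_option linter.unusedVariables false
set_option maxHeartbeats 1000000

namespace Aux

noncomputable def mset {V : Type*} [Fintype V] (G : SimpleGraph V) (k : ℕ) :
    Finset (Finset (Sym2 V)) :=
  G.edgeFinset.powerset.filter (fun M => M.card = k ∧
    ∀ e ∈ M, ∀ f ∈ M, e ≠ f → ∀ v : V, ¬(v ∈ e ∧ v ∈ f))

variable {V : Type*} [Fintype V] {W : Type*} [Fintype W]

lemma numMatchings_eq (G : SimpleGraph V) (k : ℕ) : numMatchings G k = (mset G k).card := rfl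

lemma mem_mset {G : SimpleGraph V} {k : ℕ} {M : Finset (Sym2 V)} :
    M ∈ mset G k ↔ (∀ e ∈ M, e ∈ G.edgeSet) ∧ M.card = k ∧
      ∀ e ∈ M, ∀ f ∈ M, e ≠ f → ∀ x : V, ¬(x ∈ e ∧ x ∈ f) := by
  simp only [mset, Finset.mem_filter, Finset.mem_powerset, Finset.subset_iff,
    SimpleGraph.mem_edgeFinset, SimpleGraph.mem_edgeSet]

lemma numMatchings_le_of_equiv (φ : V ≃ W) {G : SimpleGraph V} {H : SimpleGraph W}
    (h : ∀ a b : V, G.Adj a b → H.Adj (φ a) (φ b)) (k : ℕ) :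
    numMatchings G k ≤ numMatchings H k := by
  rw [numMatchings_eq, numMatchings_eq]
  have hinj : Function.Injective (Sym2.map φ) := Sym2.map.injective φ.injective
  apply Finset.card_le_card_of_injOn (fun M => M.image (Sym2.map φ))
  · intro M hM
    rw [Finset.mem_coe, mem_mset] at hM ⊢
    obtain ⟨h1, h2, h3⟩ := hM
    refine ⟨?_, ?_, ?_⟩
    · intro e' he'
      rw [Finset.mem_image] at he'
      obtain ⟨e, he, rfl⟩ := he'
      have := h1 e he
      induction e using Sym2.ind with
      | _ a b =>
        rw [Sym2.map_pair_eq, SimpleGraph.mem_edgeSet] at *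
        exact h a b this
    · rw [Finset.card_image_of_injective _ hinj]; exact h2
    · intro e' he' f' hf' hne x hx
      rw [Finset.mem_image] at he' hf'
      obtain ⟨e, he, rfl⟩ := he'
      obtain ⟨f, hf, rfl⟩ := hf'
      obtain ⟨a, ha, ha'⟩ := Sym2.mem_map.mp hx.1
      obtain ⟨b, hb, hb'⟩ := Sym2.mem_map.mp hx.2
      have hab : a = b := φ.injective (ha'.trans hb'.symm)
      subst hab
      exact h3 e he f hf (fun hh => hne (by rw [hh])) a ⟨ha, hb⟩
  · intro M hM N hN hMN
    exact Finset.image_injective hinj hMN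

lemma numMatchings_eq_of_equiv (φ : V ≃ W) {G : SimpleGraph V} {H : SimpleGraph W}
    (h : ∀ a b : V, G.Adj a b ↔ H.Adj (φ a) (φ b)) (k : ℕ) :
    numMatchings G k = numMatchings H k := by
  refine le_antisymm (numMatchings_le_of_equiv φ (fun a b => (h a b).mp) k)
    (numMatchings_le_of_equiv φ.symm (fun a b hab => ?_) k)
  have := (h (φ.symm a) (φ.symm b)).mpr
  simp only [Equiv.apply_symm_apply] at this
  exact this hab


/-- The gadget graph `G*`. -/
def gstar (G : SimpleGraph V) (u v : V) (d : ℕ) : SimpleGraph ((Fin d × V) ⊕ Fin 2) where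
  Adj x y :=
    match x, y with
    | Sum.inl (i,a), Sum.inl (j,b) => i = j ∧ G.Adj a b ∧ s(a,b) ≠ s(u,v)
    | Sum.inl (_,a), Sum.inr t => (t = 0 ∧ a = v) ∨ (t = 1 ∧ a = u)
    | Sum.inr t, Sum.inl (_,b) => (t = 0 ∧ b = v) ∨ (t = 1 ∧ b = u)
    | Sum.inr _, Sum.inr _ => False
  symm := ⟨by
    rintro (⟨i,a⟩|t) (⟨j,b⟩|s) h
    · exact ⟨h.1.symm, h.2.1.symm, fun hc => h.2.2 (Sym2.eq_swap.trans hc)⟩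
    · exact h
    · exact h
    · exact h⟩
  loopless := ⟨by
    rintro (⟨i,a⟩|t) h
    · exact G.loopless.irrefl a h.2.1
    · exact h⟩

variable {G : SimpleGraph V} {u v : V} {d : ℕ} {i j : Fin d} {a b : V} {t : Fin 2}

lemma gstar_adj_ll :
    (gstar G u v d).Adj (Sum.inl (i,a)) (Sum.inl (j,b)) ↔ i = j ∧ G.Adj a b ∧ s(a,b) ≠ s(u,v) :=
  Iff.rfl

lemma gstar_adj_rl :
    (gstar G u v d).Adj (Sum.inr t) (Sum.inl (j,b)) ↔ (t = 0 ∧ b = v) ∨ (t = 1 ∧ b = u) :=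
  Iff.rfl

lemma gstar_adj_lr :
    (gstar G u v d).Adj (Sum.inl (i,a)) (Sum.inr t) ↔ (t = 0 ∧ a = v) ∨ (t = 1 ∧ a = u) :=
  Iff.rfl

lemma gstar_adj_rr {s : Fin 2} : ¬ (gstar G u v d).Adj (Sum.inr t) (Sum.inr s) :=
  fun h => h

lemma sym2_ne (hau : a ≠ u) (hav : a ≠ v) : s(a,b) ≠ s(u,v) := by
  intro h
  have ha : a ∈ s(a,b) := Sym2.mem_mk_left a b
  rw [h, Sym2.mem_iff] at ha
  rcases ha with rfl | rfl
  · exact hau rfl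
  · exact hav rfl

lemma gstar_card {n : ℕ} (hV : Fintype.card V = 2 * n) :
    Fintype.card ((Fin d × V) ⊕ Fin 2) = 2 * (d * n + 1) := by
  simp [Fintype.card_sum, Fintype.card_prod, hV]; ring

lemma gstar_colorable (hc : G.Colorable 2) (huv : G.Adj u v) :
    (gstar G u v d).Colorable 2 := by
  obtain ⟨C⟩ := hc
  refine ⟨SimpleGraph.Coloring.mk
    (Sum.elim (fun p => C p.2) (fun t => if t = 0 then C u else C v)) ?_⟩
  rintro (⟨i,a⟩|t) (⟨j,b⟩|s) h
  · exact C.valid h.2.1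
  · rcases h with ⟨rfl, rfl⟩ | ⟨rfl, rfl⟩
    · simpa using (C.valid huv).symm
    · simpa using C.valid huv
  · rcases h with ⟨rfl, rfl⟩ | ⟨rfl, rfl⟩
    · simpa using C.valid huv
    · simpa using (C.valid huv).symm
  · exact absurd h gstar_adj_rr

lemma nbhd_inl_u (hne : u ≠ v) :
    (gstar G u v d).neighborFinset (Sum.inl (i,u)) =
      insert (Sum.inr 1) (((G.neighborFinset u).erase v).image
        (fun b => (Sum.inl (i,b) : (Fin d × V) ⊕ Fin 2))) := by
  ext y
  rcases y with ⟨j,b⟩|s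
  · simp only [SimpleGraph.mem_neighborFinset, gstar_adj_ll, Finset.mem_insert,
      Finset.mem_image, Finset.mem_erase, SimpleGraph.mem_neighborFinset,
      Sum.inl.injEq, Prod.mk.injEq]
    constructor
    · rintro ⟨rfl, hab, hs⟩
      refine Or.inr ⟨b, ⟨fun hbv => hs ?_, hab⟩, rfl, rfl⟩
      subst hbv; rfl
    · rintro (h | ⟨b', ⟨hb'v, hb'⟩, rfl, rfl⟩)
      · exact absurd h (by simp)
      · refine ⟨rfl, hb', fun hs => ?_⟩
        rw [Sym2.eq_iff] at hs
        rcases hs with ⟨-, rfl⟩ | ⟨huu, -⟩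
        · exact hb'v rfl
        · exact hne huu
  · rw [SimpleGraph.mem_neighborFinset, gstar_adj_lr]
    simp only [Finset.mem_insert, Finset.mem_image]
    constructor
    · rintro (⟨rfl, huv'⟩ | ⟨rfl, -⟩)
      · exact absurd huv' hne
      · exact Or.inl rfl
    · rintro (h | ⟨b', -, h⟩)
      · injection h with h1; subst h1; simp
      · exact absurd h (by simp)

lemma nbhd_inl_v (hne : u ≠ v) :
    (gstar G u v d).neighborFinset (Sum.inl (i,v)) =
      insert (Sum.inr 0) (((G.neighborFinset v).erase u).image
        (fun b => (Sum.inl (i,b) : (Fin d × V) ⊕ Fin 2))) := by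
  ext y
  rcases y with ⟨j,b⟩|s
  · simp only [SimpleGraph.mem_neighborFinset, gstar_adj_ll, Finset.mem_insert,
      Finset.mem_image, Finset.mem_erase, SimpleGraph.mem_neighborFinset,
      Sum.inl.injEq, Prod.mk.injEq]
    constructor
    · rintro ⟨rfl, hab, hs⟩
      refine Or.inr ⟨b, ⟨fun hbu => hs ?_, hab⟩, rfl, rfl⟩
      subst hbu; exact Sym2.eq_swap
    · rintro (h | ⟨b', ⟨hb'u, hb'⟩, rfl, rfl⟩)
      · exact absurd h (by simp)
      · refine ⟨rfl, hb', fun hs => ?_⟩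
        rw [Sym2.eq_iff] at hs
        rcases hs with ⟨hvu, -⟩ | ⟨-, rfl⟩
        · exact hne hvu.symm
        · exact hb'u rfl
  · rw [SimpleGraph.mem_neighborFinset, gstar_adj_lr]
    simp only [Finset.mem_insert, Finset.mem_image]
    constructor
    · rintro (⟨rfl, -⟩ | ⟨rfl, hvu⟩)
      · exact Or.inl rfl
      · exact absurd hvu.symm hne
    · rintro (h | ⟨b', -, h⟩)
      · injection h with h1; subst h1; simp
      · exact absurd h (by simp)

lemma nbhd_inl_other (hau : a ≠ u) (hav : a ≠ v) :
    (gstar G u v d).neighborFinset (Sum.inl (i,a)) =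
      (G.neighborFinset a).image (fun b => (Sum.inl (i,b) : (Fin d × V) ⊕ Fin 2)) := by
  ext y
  rcases y with ⟨j,b⟩|s
  · simp only [SimpleGraph.mem_neighborFinset, gstar_adj_ll, Finset.mem_image,
      SimpleGraph.mem_neighborFinset, Sum.inl.injEq, Prod.mk.injEq]
    constructor
    · rintro ⟨rfl, hab, -⟩
      exact ⟨b, hab, rfl, rfl⟩
    · rintro ⟨b', hb', rfl, rfl⟩
      exact ⟨rfl, hb', sym2_ne hau hav⟩
  · simp only [SimpleGraph.mem_neighborFinset, gstar_adj_lr, Finset.mem_image]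
    constructor
    · rintro (⟨-, h⟩ | ⟨-, h⟩)
      · exact absurd h hav
      · exact absurd h hau
    · rintro ⟨b', -, h⟩
      exact absurd h (by simp)

lemma nbhd_inr0 :
    (gstar G u v d).neighborFinset (Sum.inr 0) =
      (Finset.univ : Finset (Fin d)).image
        (fun i => (Sum.inl (i,v) : (Fin d × V) ⊕ Fin 2)) := by
  ext y
  rcases y with ⟨j,b⟩|s
  · rw [SimpleGraph.mem_neighborFinset, gstar_adj_rl]
    simp only [Finset.mem_image, Finset.mem_univ, true_and, Sum.inl.injEq, Prod.mk.injEq]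
    constructor
    · rintro (⟨-, rfl⟩ | ⟨h, -⟩)
      · refine ⟨j, ?_⟩; simp
      · exact absurd h (by decide)
    · rintro ⟨i', rfl, rfl⟩
      simp
  · rw [SimpleGraph.mem_neighborFinset]
    constructor
    · intro h; exact absurd h gstar_adj_rr
    · intro h; simp at h

lemma nbhd_inr1 :
    (gstar G u v d).neighborFinset (Sum.inr 1) =
      (Finset.univ : Finset (Fin d)).image
        (fun i => (Sum.inl (i,u) : (Fin d × V) ⊕ Fin 2)) := by
  ext y
  rcases y with ⟨j,b⟩|s
  · rw [SimpleGraph.mem_neighborFinset, gstar_adj_rl]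
    simp only [Finset.mem_image, Finset.mem_univ, true_and, Sum.inl.injEq, Prod.mk.injEq]
    constructor
    · rintro (⟨h, -⟩ | ⟨-, rfl⟩)
      · exact absurd h (by decide)
      · refine ⟨j, ?_⟩; simp
    · rintro ⟨i', rfl, rfl⟩
      simp
  · rw [SimpleGraph.mem_neighborFinset]
    constructor
    · intro h; exact absurd h gstar_adj_rr
    · intro h; simp at h

lemma copy_inj (i : Fin d) :
    Function.Injective (fun b : V => (Sum.inl (i, b) : (Fin d × V) ⊕ Fin 2)) := by
  intro x y h; simpa using h

lemma gstar_regular (hreg : G.IsRegularOfDegree d) (huv : G.Adj u v) :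
    (gstar G u v d).IsRegularOfDegree d := by
  have hne : u ≠ v := G.ne_of_adj huv
  have hd1 : 0 < d := by
    have h := hreg u
    have hv : v ∈ G.neighborFinset u := by
      rw [SimpleGraph.mem_neighborFinset]; exact huv
    calc 0 < (G.neighborFinset u).card := Finset.card_pos.mpr ⟨v, hv⟩
    _ = d := h
  rintro (⟨i,a⟩|t)
  · rcases eq_or_ne a u with hau | hau
    · rw [hau, SimpleGraph.degree, nbhd_inl_u hne,
        Finset.card_insert_of_notMem (by simp),
        Finset.card_image_of_injective _ (copy_inj i),
        Finset.card_erase_of_mem (by rw [SimpleGraph.mem_neighborFinset]; exact huv)]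
      have h := hreg u
      rw [SimpleGraph.degree] at h
      omega
    · rcases eq_or_ne a v with hav | hav
      · rw [hav, SimpleGraph.degree, nbhd_inl_v hne,
          Finset.card_insert_of_notMem (by simp),
          Finset.card_image_of_injective _ (copy_inj i),
          Finset.card_erase_of_mem (by rw [SimpleGraph.mem_neighborFinset]; exact huv.symm)]
        have h := hreg v
        rw [SimpleGraph.degree] at h
        omega
      · rw [SimpleGraph.degree, nbhd_inl_other hau hav,
          Finset.card_image_of_injective _ (copy_inj i)]
        exact hreg a
  · have hinj : Function.Injective (fun i : Fin d => (Sum.inl (i,v) : (Fin d × V) ⊕ Fin 2)) := by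
      intro x y h; simpa using h
    have hinj' : Function.Injective (fun i : Fin d => (Sum.inl (i,u) : (Fin d × V) ⊕ Fin 2)) := by
      intro x y h; simpa using h
    have ht : t = 0 ∨ t = 1 := by fin_cases t <;> simp
    rcases ht with rfl | rfl
    · rw [SimpleGraph.degree, nbhd_inr0, Finset.card_image_of_injective _ hinj]
      simp
    · rw [SimpleGraph.degree, nbhd_inr1, Finset.card_image_of_injective _ hinj']
      simp



variable {n : ℕ}

lemma deleteVerts_adj {S : Set V} {a b : V} :
    (deleteVerts G S).Adj a b ↔ G.Adj a b ∧ a ∉ S ∧ b ∉ S := Iff.rfl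

lemma mem_deleteVerts_edge {S : Set V} {f : Sym2 V} (hf : f ∈ (deleteVerts G S).edgeSet)
    {x : V} (hx : x ∈ f) : x ∉ S := by
  induction f using Sym2.ind with
  | _ a b =>
    rw [SimpleGraph.mem_edgeSet, deleteVerts_adj] at hf
    rw [Sym2.mem_iff] at hx
    rcases hx with rfl | rfl
    · exact hf.2.1
    · exact hf.2.2

lemma deleteVerts_edge_sub {S : Set V} {f : Sym2 V} (hf : f ∈ (deleteVerts G S).edgeSet) :
    f ∈ G.edgeSet := by
  induction f using Sym2.ind with
  | _ a b =>
    rw [SimpleGraph.mem_edgeSet] at *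
    exact hf.1

lemma card_mset_split (huv : G.Adj u v) (hn1 : 1 ≤ n) :
    (mset G n).card = (mset (deleteVerts G {u,v}) (n-1)).card
      + ((mset G n).filter (fun M => s(u,v) ∉ M)).card := by
  have hsplit := Finset.card_filter_add_card_filter_not
    (s := mset G n) (p := fun M => s(u,v) ∈ M)
  have h1 : ((mset G n).filter (fun M => s(u,v) ∈ M)).card
      = (mset (deleteVerts G {u,v}) (n-1)).card := by
    refine Finset.card_bij' (fun M _ => M.erase s(u,v)) (fun N _ => insert s(u,v) N) ?hi ?hj ?li ?ri
    case hi =>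
      intro M hM
      rw [Finset.mem_filter] at hM
      obtain ⟨hM, heM⟩ := hM
      rw [mem_mset] at hM ⊢
      obtain ⟨h1, h2, h3⟩ := hM
      refine ⟨?_, ?_, ?_⟩
      · intro f hf
        have hfM := Finset.mem_of_mem_erase hf
        have hfe : f ≠ s(u,v) := Finset.ne_of_mem_erase hf
        have hfG := h1 f hfM
        induction f using Sym2.ind with
        | _ a b =>
          rw [SimpleGraph.mem_edgeSet] at hfG ⊢
          rw [deleteVerts_adj]
          have hdis := h3 _ hfM _ heM hfe
          refine ⟨hfG, ?_, ?_⟩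
          · intro ha
            rcases ha with rfl | rfl
            · exact hdis a ⟨Sym2.mem_mk_left a b, Sym2.mem_mk_left a v⟩
            · exact hdis a ⟨Sym2.mem_mk_left a b, Sym2.mem_mk_right u a⟩
          · intro hb
            rcases hb with rfl | rfl
            · exact hdis b ⟨Sym2.mem_mk_right a b, Sym2.mem_mk_left b v⟩
            · exact hdis b ⟨Sym2.mem_mk_right a b, Sym2.mem_mk_right u b⟩
      · rw [Finset.card_erase_of_mem heM, h2]
      · intro e he f hf hne x
        exact h3 e (Finset.mem_of_mem_erase he) f (Finset.mem_of_mem_erase hf) hne x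
    case hj =>
      intro N hN
      rw [mem_mset] at hN
      obtain ⟨h1, h2, h3⟩ := hN
      have heN : s(u,v) ∉ N := by
        intro h
        have := mem_deleteVerts_edge (h1 _ h) (Sym2.mem_mk_left u v)
        simp at this
      rw [Finset.mem_filter]
      constructor
      · rw [mem_mset]
        refine ⟨?_, ?_, ?_⟩
        · intro f hf
          rcases Finset.mem_insert.mp hf with rfl | hf'
          · rw [SimpleGraph.mem_edgeSet]; exact huv
          · exact deleteVerts_edge_sub (h1 f hf')
        · rw [Finset.card_insert_of_notMem heN, h2]; omega
        · intro e he f hf hne x hx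
          rcases Finset.mem_insert.mp he with rfl | he' <;>
            rcases Finset.mem_insert.mp hf with rfl | hf'
          · exact hne rfl
          · have hxuv : x = u ∨ x = v := Sym2.mem_iff.mp hx.1
            have := mem_deleteVerts_edge (h1 f hf') hx.2
            rcases hxuv with rfl | rfl <;> simp at this
          · have hxuv : x = u ∨ x = v := Sym2.mem_iff.mp hx.2
            have := mem_deleteVerts_edge (h1 e he') hx.1
            rcases hxuv with rfl | rfl <;> simp at this
          · exact h3 e he' f hf' hne x hx
      · exact Finset.mem_insert_self _ _
    case li =>
      intro M hM
      rw [Finset.mem_filter] at hM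
      exact Finset.insert_erase hM.2
    case ri =>
      intro N hN
      rw [mem_mset] at hN
      apply Finset.erase_insert
      intro h
      have := mem_deleteVerts_edge (hN.1 _ h) (Sym2.mem_mk_left u v)
      simp at this
  omega


-- ### copy maps and gstar edge structure

def cmap {V : Type*} {d : ℕ} (i : Fin d) : Sym2 V → Sym2 ((Fin d × V) ⊕ Fin 2) :=
  Sym2.map (fun a => Sum.inl (i,a))

lemma cmap_inj (i : Fin d) : Function.Injective (cmap (V := V) i) :=
  Sym2.map.injective (copy_inj i)

lemma cmap_pair (i : Fin d) (a b : V) :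
    cmap i s(a,b) = s(Sum.inl (i,a), Sum.inl (i,b)) := Sym2.map_pair_eq _ a b

lemma mem_cmap {i : Fin d} {x : (Fin d × V) ⊕ Fin 2} {e : Sym2 V} :
    x ∈ cmap i e ↔ ∃ a ∈ e, Sum.inl (i,a) = x := Sym2.mem_map

lemma inr_not_mem_cmap {i : Fin d} {e : Sym2 V} {t : Fin 2} :
    (Sum.inr t : (Fin d × V) ⊕ Fin 2) ∉ cmap i e := by
  rw [mem_cmap]
  rintro ⟨a, -, h⟩
  exact absurd h (by simp)

lemma cmap_index_eq {i j : Fin d} {e f : Sym2 V} (h : cmap i e = cmap j f) : i = j := by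
  induction e using Sym2.ind with
  | _ a b =>
    have : (Sum.inl (i,a) : (Fin d × V) ⊕ Fin 2) ∈ cmap j f := by
      rw [← h, cmap_pair]; exact Sym2.mem_mk_left _ _
    rw [mem_cmap] at this
    obtain ⟨c, -, hc⟩ := this
    injection hc with h1
    injection h1 with h2 h3
    exact h2.symm

lemma gstar_edge_cases {G : SimpleGraph V} {u v : V} {d : ℕ}
    {E : Sym2 ((Fin d × V) ⊕ Fin 2)} (hE : E ∈ (gstar G u v d).edgeSet) :
    (∃ i e, E = cmap i e ∧ e ∈ G.edgeSet ∧ e ≠ s(u,v)) ∨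
    (∃ i, E = s(Sum.inr 0, Sum.inl (i,v))) ∨ (∃ i, E = s(Sum.inr 1, Sum.inl (i,u))) := by
  induction E using Sym2.ind with
  | _ x y =>
    rw [SimpleGraph.mem_edgeSet] at hE
    rcases x with ⟨i,a⟩|t <;> rcases y with ⟨j,b⟩|s
    · rw [gstar_adj_ll] at hE
      obtain ⟨rfl, hab, hne⟩ := hE
      exact Or.inl ⟨i, s(a,b), (cmap_pair i a b).symm, (G.mem_edgeSet).mpr hab, hne⟩
    · rw [gstar_adj_lr] at hE
      rcases hE with ⟨rfl, rfl⟩ | ⟨rfl, rfl⟩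
      · exact Or.inr (Or.inl ⟨i, Sym2.eq_swap⟩)
      · exact Or.inr (Or.inr ⟨i, Sym2.eq_swap⟩)
    · rw [gstar_adj_rl] at hE
      rcases hE with ⟨rfl, rfl⟩ | ⟨rfl, rfl⟩
      · exact Or.inr (Or.inl ⟨j, rfl⟩)
      · exact Or.inr (Or.inr ⟨j, rfl⟩)
    · exact absurd hE gstar_adj_rr

-- ### covering lemmas

lemma matching_cover {W : Type*} [Fintype W] {H : SimpleGraph W} {M : Finset (Sym2 W)} {k : ℕ}
    (hM : M ∈ mset H k) (hk : Fintype.card W = 2 * k) (x : W) : ∃ E ∈ M, x ∈ E := by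
  obtain ⟨h1, h2, h3⟩ := mem_mset.mp hM
  have hcard2 : ∀ E ∈ M, (Finset.univ.filter (fun y => y ∈ E)).card = 2 := by
    intro E hE
    have := h1 E hE
    induction E using Sym2.ind with
    | _ a b =>
      rw [SimpleGraph.mem_edgeSet] at this
      have hne := this.ne
      have : Finset.univ.filter (fun y => y ∈ s(a,b)) = {a, b} := by
        ext z
        simp [Sym2.mem_iff]
      rw [this, Finset.card_insert_of_notMem (by simpa using hne), Finset.card_singleton]
  have hdisj : ∀ E ∈ M, ∀ F ∈ M, E ≠ F →
      Disjoint (Finset.univ.filter (fun y => y ∈ E)) (Finset.univ.filter (fun y => y ∈ F)) := by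
    intro E hE F hF hne
    rw [Finset.disjoint_left]
    intro z hz hz'
    rw [Finset.mem_filter] at hz hz'
    exact h3 E hE F hF hne z ⟨hz.2, hz'.2⟩
  have hcard : (M.biUnion (fun E => Finset.univ.filter (fun y => y ∈ E))).card = Fintype.card W := by
    rw [Finset.card_biUnion hdisj]
    rw [Finset.sum_congr rfl hcard2, Finset.sum_const, h2, hk, smul_eq_mul]
    ring
  have huniv : M.biUnion (fun E => Finset.univ.filter (fun y => y ∈ E)) = Finset.univ := by
    apply Finset.eq_univ_of_card
    rw [hcard]
  have : x ∈ M.biUnion (fun E => Finset.univ.filter (fun y => y ∈ E)) := by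
    rw [huniv]; exact Finset.mem_univ x
  rw [Finset.mem_biUnion] at this
  obtain ⟨E, hE, hxE⟩ := this
  rw [Finset.mem_filter] at hxE
  exact ⟨E, hE, hxE.2⟩

lemma matching_unique {W : Type*} [Fintype W] {H : SimpleGraph W} {M : Finset (Sym2 W)} {k : ℕ}
    (hM : M ∈ mset H k) {E F : Sym2 W} {x : W} (hE : E ∈ M) (hF : F ∈ M)
    (hxE : x ∈ E) (hxF : x ∈ F) : E = F := by
  by_contra hne
  exact (mem_mset.mp hM).2.2 E hE F hF hne x ⟨hxE, hxF⟩

-- ### the lower bound  Q^d ≤ m_{dn}(G*)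

lemma star_lower {G : SimpleGraph V} {u v : V} {d n : ℕ} :
    ((mset G n).filter (fun M => s(u,v) ∉ M)).card ^ d
      ≤ (mset (gstar G u v d) (d*n)).card := by
  set Qs := (mset G n).filter (fun M => s(u,v) ∉ M) with hQs
  have hcard : Qs.card ^ d = (Fintype.piFinset (fun _ : Fin d => Qs)).card := by
    rw [Fintype.card_piFinset, Finset.prod_const, Finset.card_univ, Fintype.card_fin]
  rw [hcard]
  have key : ∀ (f g : Fin d → Finset (Sym2 V)),
      Finset.univ.biUnion (fun i => (f i).image (cmap i))
        = Finset.univ.biUnion (fun i => (g i).image (cmap i)) →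
      ∀ i e, e ∈ f i → e ∈ g i := by
    intro f g h i e he
    have : cmap i e ∈ Finset.univ.biUnion (fun i => (g i).image (cmap i)) := by
      rw [← h, Finset.mem_biUnion]
      exact ⟨i, Finset.mem_univ i, Finset.mem_image_of_mem _ he⟩
    rw [Finset.mem_biUnion] at this
    obtain ⟨j, -, hj⟩ := this
    rw [Finset.mem_image] at hj
    obtain ⟨e', he', heq⟩ := hj
    obtain rfl : j = i := cmap_index_eq heq
    rwa [cmap_inj j heq] at he'
  apply Finset.card_le_card_of_injOn (fun f => Finset.univ.biUnion (fun i => (f i).image (cmap i)))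
  · intro f hf
    rw [Finset.mem_coe, Fintype.mem_piFinset] at hf
    have hfm : ∀ i, f i ∈ mset G n ∧ s(u,v) ∉ f i := by
      intro i; have := hf i; rwa [hQs, Finset.mem_filter] at this
    rw [Finset.mem_coe, mem_mset]
    refine ⟨?_, ?_, ?_⟩
    · intro E hE
      rw [Finset.mem_biUnion] at hE
      obtain ⟨i, -, hE⟩ := hE
      rw [Finset.mem_image] at hE
      obtain ⟨e, he, rfl⟩ := hE
      have heG := (mem_mset.mp (hfm i).1).1 e he
      have hene : e ≠ s(u,v) := fun h => (hfm i).2 (h ▸ he)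
      induction e using Sym2.ind with
      | _ a b =>
        rw [cmap_pair, SimpleGraph.mem_edgeSet] at *
        exact gstar_adj_ll.mpr ⟨rfl, heG, hene⟩
    · rw [Finset.card_biUnion]
      · have : ∀ i ∈ (Finset.univ : Finset (Fin d)), ((f i).image (cmap i)).card = n := by
          intro i _
          rw [Finset.card_image_of_injective _ (cmap_inj i), (mem_mset.mp (hfm i).1).2.1]
        rw [Finset.sum_congr rfl this, Finset.sum_const, Finset.card_univ, Fintype.card_fin,
          smul_eq_mul]
      · intro i _ j _ hij
        rw [Function.onFun, Finset.disjoint_left]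
        intro E hEi hEj
        rw [Finset.mem_image] at hEi hEj
        obtain ⟨e, -, rfl⟩ := hEi
        obtain ⟨e', -, heq⟩ := hEj
        exact hij (cmap_index_eq heq).symm
    · intro E hE F hF hne x hx
      rw [Finset.mem_biUnion] at hE hF
      obtain ⟨i, -, hE⟩ := hE
      obtain ⟨j, -, hF⟩ := hF
      rw [Finset.mem_image] at hE hF
      obtain ⟨e, he, rfl⟩ := hE
      obtain ⟨e', he', rfl⟩ := hF
      obtain ⟨a, ha, rfl⟩ := mem_cmap.mp hx.1
      obtain ⟨b, hb, hba⟩ := mem_cmap.mp hx.2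
      injection hba with h1
      injection h1 with h2 h3
      rw [h2] at he'
      rw [h3] at hb
      have hee' : e ≠ e' := fun h => hne (by rw [h, h2])
      exact (mem_mset.mp (hfm i).1).2.2 e he e' he' hee' a ⟨ha, hb⟩
  · intro f hf g hg h
    funext i
    ext e
    exact ⟨fun he => key f g h i e he, fun he => key g f h.symm i e he⟩

-- ### pullbacks of matchings in gstar

noncomputable def pb {V : Type*} [Fintype V] {d : ℕ} (j : Fin d)
    (M : Finset (Sym2 ((Fin d × V) ⊕ Fin 2))) : Finset (Sym2 V) :=
  Finset.univ.filter (fun e => cmap j e ∈ M)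

lemma mem_pb {d : ℕ} {j : Fin d} {M : Finset (Sym2 ((Fin d × V) ⊕ Fin 2))} {e : Sym2 V} :
    e ∈ pb j M ↔ cmap j e ∈ M := by simp [pb]

section StarCount

variable {G : SimpleGraph V} {u v : V} {d n : ℕ}
variable {M : Finset (Sym2 ((Fin d × V) ⊕ Fin 2))}

/-- the two special star edges in copy `j` -/
abbrev se0 (v : V) (j : Fin d) : Sym2 ((Fin d × V) ⊕ Fin 2) := s(Sum.inr 0, Sum.inl (j,v))
abbrev se1 (u : V) (j : Fin d) : Sym2 ((Fin d × V) ⊕ Fin 2) := s(Sum.inr 1, Sum.inl (j,u))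

lemma star0_mem_unique (hM : M ∈ mset (gstar G u v d) (d*n+1)) {i j : Fin d}
    (hi : se0 v i ∈ M) (hj : se0 v j ∈ M) : i = j := by
  have h := matching_unique hM hi hj (Sym2.mem_mk_left _ _) (Sym2.mem_mk_left _ _)
  rw [Sym2.eq_iff] at h
  rcases h with ⟨-, h⟩ | ⟨h, -⟩
  · simp only [Sum.inl.injEq, Prod.mk.injEq] at h
    exact h.1
  · exact absurd h (by simp)

lemma star1_mem_unique (hM : M ∈ mset (gstar G u v d) (d*n+1)) {i j : Fin d}
    (hi : se1 u i ∈ M) (hj : se1 u j ∈ M) : i = j := by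
  have h := matching_unique hM hi hj (Sym2.mem_mk_left _ _) (Sym2.mem_mk_left _ _)
  rw [Sym2.eq_iff] at h
  rcases h with ⟨-, h⟩ | ⟨h, -⟩
  · simp only [Sum.inl.injEq, Prod.mk.injEq] at h
    exact h.1
  · exact absurd h (by simp)

lemma star0_exists (hV : Fintype.card V = 2*n) (hM : M ∈ mset (gstar G u v d) (d*n+1)) :
    ∃ i, se0 v i ∈ M := by
  obtain ⟨E, hE, hx⟩ := matching_cover hM (gstar_card hV) (Sum.inr 0)
  rcases gstar_edge_cases ((mem_mset.mp hM).1 E hE) with ⟨i,e,rfl,-,-⟩ | ⟨i, rfl⟩ | ⟨i, rfl⟩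
  · exact absurd hx inr_not_mem_cmap
  · exact ⟨i, hE⟩
  · rw [Sym2.mem_iff] at hx
    rcases hx with h | h
    · injection h with h1; exact absurd h1 (by decide)
    · exact absurd h (by simp)

lemma star1_exists (hV : Fintype.card V = 2*n) (hM : M ∈ mset (gstar G u v d) (d*n+1)) :
    ∃ i, se1 u i ∈ M := by
  obtain ⟨E, hE, hx⟩ := matching_cover hM (gstar_card hV) (Sum.inr 1)
  rcases gstar_edge_cases ((mem_mset.mp hM).1 E hE) with ⟨i,e,rfl,-,-⟩ | ⟨i, rfl⟩ | ⟨i, rfl⟩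
  · exact absurd hx inr_not_mem_cmap
  · rw [Sym2.mem_iff] at hx
    rcases hx with h | h
    · injection h with h1; exact absurd h1 (by decide)
    · exact absurd h (by simp)
  · exact ⟨i, hE⟩

lemma pb_adj (hM : M ∈ mset (gstar G u v d) (d*n+1)) {j : Fin d} {e : Sym2 V}
    (he : e ∈ pb j M) : e ∈ G.edgeSet ∧ e ≠ s(u,v) := by
  have hE := (mem_mset.mp hM).1 _ (mem_pb.mp he)
  induction e using Sym2.ind with
  | _ a b =>
    rw [cmap_pair, SimpleGraph.mem_edgeSet, gstar_adj_ll] at hE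
    exact ⟨(G.mem_edgeSet).mpr hE.2.1, hE.2.2⟩

lemma copy_no_v (hM : M ∈ mset (gstar G u v d) (d*n+1)) {j : Fin d}
    (h0 : se0 v j ∈ M) {e : Sym2 V} (he : e ∈ pb j M) : v ∉ e := by
  intro hv
  have h1 : (Sum.inl (j,v) : (Fin d × V) ⊕ Fin 2) ∈ cmap j e := mem_cmap.mpr ⟨v, hv, rfl⟩
  have heq := matching_unique hM (mem_pb.mp he) h0 h1 (Sym2.mem_mk_right _ _)
  have : (Sum.inr 0 : (Fin d × V) ⊕ Fin 2) ∈ cmap j e := by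
    rw [heq]; exact Sym2.mem_mk_left _ _
  exact inr_not_mem_cmap this

lemma copy_no_u (hM : M ∈ mset (gstar G u v d) (d*n+1)) {j : Fin d}
    (h1 : se1 u j ∈ M) {e : Sym2 V} (he : e ∈ pb j M) : u ∉ e := by
  intro hu
  have hmem : (Sum.inl (j,u) : (Fin d × V) ⊕ Fin 2) ∈ cmap j e := mem_cmap.mpr ⟨u, hu, rfl⟩
  have heq := matching_unique hM (mem_pb.mp he) h1 hmem (Sym2.mem_mk_right _ _)
  have : (Sum.inr 1 : (Fin d × V) ⊕ Fin 2) ∈ cmap j e := by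
    rw [heq]; exact Sym2.mem_mk_left _ _
  exact inr_not_mem_cmap this

lemma copy_cover (hV : Fintype.card V = 2*n) (hM : M ∈ mset (gstar G u v d) (d*n+1))
    {j : Fin d} {a : V} (h0 : ¬(a = v ∧ se0 v j ∈ M)) (h1 : ¬(a = u ∧ se1 u j ∈ M)) :
    ∃ e ∈ pb j M, a ∈ e := by
  obtain ⟨E, hE, hx⟩ := matching_cover hM (gstar_card hV) (Sum.inl (j,a))
  rcases gstar_edge_cases ((mem_mset.mp hM).1 E hE) with ⟨i,e,rfl,-,-⟩ | ⟨i, rfl⟩ | ⟨i, rfl⟩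
  · obtain ⟨b, hb, hba⟩ := mem_cmap.mp hx
    injection hba with hp
    injection hp with hij hab
    refine ⟨e, mem_pb.mpr ?_, hab ▸ hb⟩
    rwa [hij] at hE
  · rw [Sym2.mem_iff] at hx
    rcases hx with h | h
    · exact absurd h (by simp)
    · injection h with hp
      injection hp with hij hav
      rw [← hij] at hE
      exact absurd ⟨hav, hE⟩ h0
  · rw [Sym2.mem_iff] at hx
    rcases hx with h | h
    · exact absurd h (by simp)
    · injection h with hp
      injection hp with hij hau
      rw [← hij] at hE
      exact absurd ⟨hau, hE⟩ h1

lemma pb_pairwise (hM : M ∈ mset (gstar G u v d) (d*n+1)) {j : Fin d} :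
    ∀ e ∈ pb j M, ∀ f ∈ pb j M, e ≠ f → ∀ x : V, ¬(x ∈ e ∧ x ∈ f) := by
  intro e he f hf hef x hx
  have hne : cmap j e ≠ cmap j f := fun h => hef (cmap_inj j h)
  exact (mem_mset.mp hM).2.2 _ (mem_pb.mp he) _ (mem_pb.mp hf) hne (Sum.inl (j,x))
    ⟨mem_cmap.mpr ⟨x, hx.1, rfl⟩, mem_cmap.mpr ⟨x, hx.2, rfl⟩⟩

lemma copy_count (hV : Fintype.card V = 2*n) (hne : u ≠ v)
    (hM : M ∈ mset (gstar G u v d) (d*n+1)) (j : Fin d) :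
    2 * (pb j M).card
      + (Finset.univ.filter (fun a : V => (a = v ∧ se0 v j ∈ M) ∨ (a = u ∧ se1 u j ∈ M))).card
      = 2 * n := by
  set S := Finset.univ.filter
    (fun a : V => (a = v ∧ se0 v j ∈ M) ∨ (a = u ∧ se1 u j ∈ M)) with hS
  have hC : (pb j M).biUnion (fun e => Finset.univ.filter (· ∈ e)) = Finset.univ \ S := by
    ext a
    simp only [Finset.mem_biUnion, Finset.mem_sdiff, Finset.mem_univ, true_and,
      Finset.mem_filter, hS]
    constructor
    · rintro ⟨e, he, hae⟩
      rintro (⟨rfl, h0⟩ | ⟨rfl, h1⟩)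
      · exact copy_no_v hM h0 he hae
      · exact copy_no_u hM h1 he hae
    · intro haS
      push_neg at haS
      obtain ⟨e, he, hae⟩ := copy_cover hV hM (fun h => (haS.1 h.1) h.2)
        (fun h => (haS.2 h.1) h.2)
      exact ⟨e, he, hae⟩
  have hcard2 : ∀ e ∈ pb j M, (Finset.univ.filter (· ∈ e)).card = 2 := by
    intro e he
    have hG := (pb_adj hM he).1
    induction e using Sym2.ind with
    | _ a b =>
      rw [SimpleGraph.mem_edgeSet] at hG
      have hab := hG.ne
      have : Finset.univ.filter (· ∈ s(a,b)) = {a, b} := by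
        ext z; simp [Sym2.mem_iff]
      rw [this, Finset.card_insert_of_notMem (by simpa using hab), Finset.card_singleton]
  have hbu : ((pb j M).biUnion (fun e => Finset.univ.filter (· ∈ e))).card
      = 2 * (pb j M).card := by
    rw [Finset.card_biUnion]
    · rw [Finset.sum_congr rfl hcard2, Finset.sum_const, smul_eq_mul]; ring
    · intro e he f hf hef
      rw [Function.onFun, Finset.disjoint_left]
      intro z hz hz'
      rw [Finset.mem_filter] at hz hz'
      exact pb_pairwise hM e he f hf hef z ⟨hz.2, hz'.2⟩
  have hsd : (Finset.univ \ S).card = Fintype.card V - S.card := by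
    rw [Finset.card_sdiff_of_subset (Finset.subset_univ S), Finset.card_univ]
  have hSle : S.card ≤ Fintype.card V := Finset.card_le_card (Finset.subset_univ S)
  rw [hC, hsd, hV] at hbu
  omega

lemma star1_of_star0 (hV : Fintype.card V = 2*n) (hne : u ≠ v)
    (hM : M ∈ mset (gstar G u v d) (d*n+1)) {i : Fin d} (h0 : se0 v i ∈ M) :
    se1 u i ∈ M := by
  obtain ⟨j, hj⟩ := star1_exists hV hM
  rcases eq_or_ne j i with rfl | hji
  · exact hj
  · exfalso
    have h0j : ¬ se0 v j ∈ M := fun h => hji (star0_mem_unique hM h h0)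
    have hcc := copy_count hV hne hM j
    have : Finset.univ.filter
        (fun a : V => (a = v ∧ se0 v j ∈ M) ∨ (a = u ∧ se1 u j ∈ M)) = {u} := by
      ext a
      simp only [Finset.mem_filter, Finset.mem_univ, true_and, Finset.mem_singleton]
      constructor
      · rintro (⟨rfl, h⟩ | ⟨rfl, -⟩)
        · exact absurd h h0j
        · rfl
      · rintro rfl
        exact Or.inr ⟨rfl, hj⟩
    rw [this, Finset.card_singleton] at hcc
    omega

lemma pb_card_mid (hV : Fintype.card V = 2*n) (hne : u ≠ v)
    (hM : M ∈ mset (gstar G u v d) (d*n+1)) {i : Fin d} (h0 : se0 v i ∈ M)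
    (h1 : se1 u i ∈ M) : (pb i M).card = n - 1 := by
  have hcc := copy_count hV hne hM i
  have : Finset.univ.filter
      (fun a : V => (a = v ∧ se0 v i ∈ M) ∨ (a = u ∧ se1 u i ∈ M)) = {v, u} := by
    ext a
    simp only [Finset.mem_filter, Finset.mem_univ, true_and, Finset.mem_insert,
      Finset.mem_singleton]
    constructor
    · rintro (⟨rfl, -⟩ | ⟨rfl, -⟩)
      · exact Or.inl rfl
      · exact Or.inr rfl
    · rintro (rfl | rfl)
      · exact Or.inl ⟨rfl, h0⟩
      · exact Or.inr ⟨rfl, h1⟩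
  rw [this, Finset.card_insert_of_notMem (by simpa using hne.symm),
    Finset.card_singleton] at hcc
  omega

lemma pb_card_full (hV : Fintype.card V = 2*n) (hne : u ≠ v)
    (hM : M ∈ mset (gstar G u v d) (d*n+1)) {j : Fin d} (h0 : se0 v j ∉ M)
    (h1 : se1 u j ∉ M) : (pb j M).card = n := by
  have hcc := copy_count hV hne hM j
  have : Finset.univ.filter
      (fun a : V => (a = v ∧ se0 v j ∈ M) ∨ (a = u ∧ se1 u j ∈ M)) = ∅ := by
    ext a
    simp only [Finset.mem_filter, Finset.mem_univ, true_and, Finset.notMem_empty,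
      iff_false]
    rintro (⟨-, h⟩ | ⟨-, h⟩)
    · exact h0 h
    · exact h1 h
  rw [this, Finset.card_empty] at hcc
  omega

lemma pb_i_mem (hV : Fintype.card V = 2*n) (hne : u ≠ v)
    (hM : M ∈ mset (gstar G u v d) (d*n+1)) {i : Fin d} (h0 : se0 v i ∈ M)
    (h1 : se1 u i ∈ M) : pb i M ∈ mset (deleteVerts G {u,v}) (n-1) := by
  rw [mem_mset]
  refine ⟨?_, pb_card_mid hV hne hM h0 h1, pb_pairwise hM⟩
  intro e he
  have hG := (pb_adj hM he).1
  have hv := copy_no_v hM h0 he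
  have hu := copy_no_u hM h1 he
  induction e using Sym2.ind with
  | _ a b =>
    rw [SimpleGraph.mem_edgeSet] at hG ⊢
    rw [deleteVerts_adj]
    rw [Sym2.mem_iff] at hv hu
    push_neg at hv hu
    refine ⟨hG, ?_, ?_⟩
    · rintro (rfl | rfl)
      · exact hu.1 rfl
      · exact hv.1 rfl
    · rintro (rfl | rfl)
      · exact hu.2 rfl
      · exact hv.2 rfl

lemma pb_j_mem (hV : Fintype.card V = 2*n) (hne : u ≠ v)
    (hM : M ∈ mset (gstar G u v d) (d*n+1)) {j : Fin d} (h0 : se0 v j ∉ M)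
    (h1 : se1 u j ∉ M) : pb j M ∈ (mset G n).filter (fun N => s(u,v) ∉ N) := by
  rw [Finset.mem_filter]
  constructor
  · rw [mem_mset]
    exact ⟨fun e he => (pb_adj hM he).1, pb_card_full hV hne hM h0 h1, pb_pairwise hM⟩
  · intro h
    exact (pb_adj hM h).2 rfl

end StarCount

section StarUpper

variable {G : SimpleGraph V} {u v : V} {d n : ℕ}
variable {M : Finset (Sym2 ((Fin d × V) ⊕ Fin 2))}

lemma reconstruction (hV : Fintype.card V = 2*n) (hne : u ≠ v)
    (hM : M ∈ mset (gstar G u v d) (d*n+1)) {i : Fin d} (h0 : se0 v i ∈ M) :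
    M = insert (se0 v i) (insert (se1 u i)
      (Finset.univ.biUnion (fun j => (pb j M).image (cmap j)))) := by
  have h1 := star1_of_star0 hV hne hM h0
  ext E
  constructor
  · intro hE
    rcases gstar_edge_cases ((mem_mset.mp hM).1 E hE) with ⟨j,e,rfl,-,-⟩ | ⟨j, rfl⟩ | ⟨j, rfl⟩
    · refine Finset.mem_insert_of_mem (Finset.mem_insert_of_mem ?_)
      rw [Finset.mem_biUnion]
      exact ⟨j, Finset.mem_univ j, Finset.mem_image_of_mem _ (mem_pb.mpr hE)⟩
    · have : j = i := star0_mem_unique hM hE h0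
      rw [← this]; exact Finset.mem_insert_self _ _
    · have : j = i := star1_mem_unique hM hE h1
      rw [← this]; exact Finset.mem_insert_of_mem (Finset.mem_insert_self _ _)
  · intro hE
    rcases Finset.mem_insert.mp hE with rfl | hE'
    · exact h0
    rcases Finset.mem_insert.mp hE' with rfl | hE''
    · exact h1
    rw [Finset.mem_biUnion] at hE''
    obtain ⟨j, -, hj⟩ := hE''
    obtain ⟨e, he, rfl⟩ := Finset.mem_image.mp hj
    exact mem_pb.mp he

lemma star_upper (hV : Fintype.card V = 2*n) (hne : u ≠ v) :
    (mset (gstar G u v d) (d*n+1)).card ≤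
      d * ((mset (deleteVerts G {u,v}) (n-1)).card
        * ((mset G n).filter (fun N => s(u,v) ∉ N)).card ^ (d-1)) := by
  classical
  set M's := mset (deleteVerts G {u,v}) (n-1) with hM's
  set Qs := (mset G n).filter (fun N => s(u,v) ∉ N) with hQs
  have hsub : mset (gstar G u v d) (d*n+1) ⊆
      Finset.univ.biUnion (fun i : Fin d =>
        (mset (gstar G u v d) (d*n+1)).filter (fun M => se0 v i ∈ M)) := by
    intro M hM
    obtain ⟨i, hi⟩ := star0_exists hV hM
    rw [Finset.mem_biUnion]
    exact ⟨i, Finset.mem_univ i, Finset.mem_filter.mpr ⟨hM, hi⟩⟩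
  have hper : ∀ i : Fin d,
      ((mset (gstar G u v d) (d*n+1)).filter (fun M => se0 v i ∈ M)).card
        ≤ M's.card * Qs.card ^ (d-1) := by
    intro i
    set Bi := (mset (gstar G u v d) (d*n+1)).filter (fun M => se0 v i ∈ M) with hBi
    have hBmem : ∀ M : {M // M ∈ Bi}, M.1 ∈ mset (gstar G u v d) (d*n+1) ∧ se0 v i ∈ M.1 := by
      intro M
      exact Finset.mem_filter.mp M.2
    have hmem1 : ∀ M : {M // M ∈ Bi}, pb i M.1 ∈ M's := by
      intro M
      obtain ⟨hM, h0⟩ := hBmem M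
      exact pb_i_mem hV hne hM h0 (star1_of_star0 hV hne hM h0)
    have hmem2 : ∀ (M : {M // M ∈ Bi}) (j : {j : Fin d // j ≠ i}), pb j.1 M.1 ∈ Qs := by
      intro M j
      obtain ⟨hM, h0⟩ := hBmem M
      have h1 := star1_of_star0 hV hne hM h0
      refine pb_j_mem hV hne hM (fun h => j.2 (star0_mem_unique hM h h0))
        (fun h => j.2 (star1_mem_unique hM h h1))
    have hcard : Bi.card = Fintype.card {M // M ∈ Bi} := (Fintype.card_coe Bi).symm
    rw [hcard]
    have htarget : Fintype.card ({N // N ∈ M's} × ({j : Fin d // j ≠ i} → {N // N ∈ Qs}))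
        = M's.card * Qs.card ^ (d-1) := by
      rw [Fintype.card_prod, Fintype.card_coe, Fintype.card_fun, Fintype.card_coe]
      have hsub : Fintype.card {j : Fin d // j ≠ i} = d - 1 := by
        have := Fintype.card_subtype_compl (fun j : Fin d => j = i)
        rw [Fintype.card_subtype_eq, Fintype.card_fin] at this
        exact this
      rw [hsub]
    rw [← htarget]
    apply Fintype.card_le_of_injective
      (fun M => (⟨pb i M.1, hmem1 M⟩, fun j => ⟨pb j.1 M.1, hmem2 M j⟩))
    intro M M' h
    have h0 : pb i M.1 = pb i M'.1 := Subtype.ext_iff.mp (congrArg Prod.fst h)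
    have hj : ∀ j : Fin d, j ≠ i → pb j M.1 = pb j M'.1 := by
      intro j hjne
      exact Subtype.ext_iff.mp (congrFun (congrArg Prod.snd h) ⟨j, hjne⟩)
    have hall : ∀ j, pb j M.1 = pb j M'.1 := by
      intro j
      rcases eq_or_ne j i with rfl | h'
      · exact h0
      · exact hj j h'
    apply Subtype.ext
    rw [reconstruction hV hne (hBmem M).1 (hBmem M).2,
      reconstruction hV hne (hBmem M').1 (hBmem M').2]
    congr 1
    congr 1
    apply Finset.biUnion_congr rfl
    intro j _
    rw [hall j]
  calc (mset (gstar G u v d) (d*n+1)).card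
      ≤ (Finset.univ.biUnion (fun i : Fin d =>
          (mset (gstar G u v d) (d*n+1)).filter (fun M => se0 v i ∈ M))).card :=
        Finset.card_le_card hsub
    _ ≤ ∑ i : Fin d, ((mset (gstar G u v d) (d*n+1)).filter (fun M => se0 v i ∈ M)).card :=
        Finset.card_biUnion_le
    _ ≤ ∑ _i : Fin d, M's.card * Qs.card ^ (d-1) := Finset.sum_le_sum (fun i _ => hper i)
    _ = d * (M's.card * Qs.card ^ (d-1)) := by
        rw [Finset.sum_const, Finset.card_univ, Fintype.card_fin, smul_eq_mul]

end StarUpper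

section StarPos

variable {G : SimpleGraph V} {u v : V} {d n : ℕ}

lemma star_pos (hne : u ≠ v) (hn1 : 1 ≤ n) (hd1 : 0 < d)
    (hm' : (mset (deleteVerts G (({u,v} : Set V))) (n-1)).Nonempty)
    (hQ : ((mset G n).filter (fun N => s(u,v) ∉ N)).Nonempty) :
    (mset (gstar G u v d) (d*n+1)).Nonempty := by
  obtain ⟨N', hN'⟩ := hm'
  obtain ⟨N0, hN0f⟩ := hQ
  rw [Finset.mem_filter] at hN0f
  obtain ⟨hN0, hN0e⟩ := hN0f
  obtain ⟨hN'1, hN'2, hN'3⟩ := mem_mset.mp hN'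
  obtain ⟨hN01, hN02, hN03⟩ := mem_mset.mp hN0
  set i0 : Fin d := ⟨0, hd1⟩ with hi0
  set R : Finset (Sym2 ((Fin d × V) ⊕ Fin 2)) :=
    (N'.image (cmap i0)) ∪ (Finset.univ.erase i0).biUnion (fun j => N0.image (cmap j)) with hR
  have hRmem : ∀ E ∈ R, ∃ j e, E = cmap j e ∧ ((j = i0 ∧ e ∈ N') ∨ (j ≠ i0 ∧ e ∈ N0)) := by
    intro E hE
    rw [hR, Finset.mem_union] at hE
    rcases hE with hE | hE
    · obtain ⟨e, he, rfl⟩ := Finset.mem_image.mp hE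
      exact ⟨i0, e, rfl, Or.inl ⟨rfl, he⟩⟩
    · rw [Finset.mem_biUnion] at hE
      obtain ⟨j, hj, hE⟩ := hE
      obtain ⟨e, he, rfl⟩ := Finset.mem_image.mp hE
      exact ⟨j, e, rfl, Or.inr ⟨Finset.ne_of_mem_erase hj, he⟩⟩
  have hN'u : ∀ e ∈ N', ∀ x ∈ e, x ≠ u ∧ x ≠ v := by
    intro e he x hx
    have := mem_deleteVerts_edge (hN'1 e he) hx
    simp only [Set.mem_insert_iff, Set.mem_singleton_iff] at this
    push_neg at this
    exact this
  have hN'G : ∀ e ∈ N', e ∈ G.edgeSet := fun e he => deleteVerts_edge_sub (hN'1 e he)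
  have hN'ne : ∀ e ∈ N', e ≠ s(u,v) := by
    intro e he h
    exact (hN'u e he u (h ▸ Sym2.mem_mk_left u v)).1 rfl
  have hN0ne : ∀ e ∈ N0, e ≠ s(u,v) := fun e he h => hN0e (h ▸ he)
  have hedge : ∀ (j : Fin d) (e : Sym2 V), e ∈ G.edgeSet → e ≠ s(u,v) →
      cmap j e ∈ (gstar G u v d).edgeSet := by
    intro j e heG hene
    induction e using Sym2.ind with
    | _ a b =>
      rw [cmap_pair, SimpleGraph.mem_edgeSet] at *
      exact gstar_adj_ll.mpr ⟨rfl, heG, hene⟩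
  have hse0 : se0 v i0 ∈ (gstar G u v d).edgeSet :=
    (SimpleGraph.mem_edgeSet _).mpr (gstar_adj_rl.mpr (Or.inl ⟨rfl, rfl⟩))
  have hse1 : se1 u i0 ∈ (gstar G u v d).edgeSet :=
    (SimpleGraph.mem_edgeSet _).mpr (gstar_adj_rl.mpr (Or.inr ⟨rfl, rfl⟩))
  -- non-membership facts
  have hse0R : se0 v i0 ∉ R := by
    intro h
    obtain ⟨j, e, he, -⟩ := hRmem _ h
    have : (Sum.inr 0 : (Fin d × V) ⊕ Fin 2) ∈ cmap j e := by
      rw [← he]; exact Sym2.mem_mk_left _ _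
    exact inr_not_mem_cmap this
  have hse1R : se1 u i0 ∉ R := by
    intro h
    obtain ⟨j, e, he, -⟩ := hRmem _ h
    have : (Sum.inr 1 : (Fin d × V) ⊕ Fin 2) ∈ cmap j e := by
      rw [← he]; exact Sym2.mem_mk_left _ _
    exact inr_not_mem_cmap this
  have hse01 : se0 v i0 ≠ se1 u i0 := by
    intro hq
    rw [Sym2.eq_iff] at hq
    rcases hq with ⟨h, -⟩ | ⟨h, -⟩
    · injection h with h1; exact absurd h1 (by decide)
    · exact absurd h (by simp)
  -- pairwise vertex disjointness helpers
  have h_se0_R : ∀ F ∈ R, ∀ x, ¬(x ∈ se0 v i0 ∧ x ∈ F) := by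
    intro F hF x hx
    obtain ⟨j, e, rfl, hcase⟩ := hRmem F hF
    rcases Sym2.mem_iff.mp hx.1 with rfl | rfl
    · exact inr_not_mem_cmap hx.2
    · obtain ⟨a, ha, hax⟩ := mem_cmap.mp hx.2
      injection hax with hp
      injection hp with hj ha2
      rcases hcase with ⟨hj0, heN'⟩ | ⟨hji, heN0⟩
      · exact (hN'u e heN' a ha).2 ha2
      · exact hji hj
  have h_se1_R : ∀ F ∈ R, ∀ x, ¬(x ∈ se1 u i0 ∧ x ∈ F) := by
    intro F hF x hx
    obtain ⟨j, e, rfl, hcase⟩ := hRmem F hF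
    rcases Sym2.mem_iff.mp hx.1 with rfl | rfl
    · exact inr_not_mem_cmap hx.2
    · obtain ⟨a, ha, hax⟩ := mem_cmap.mp hx.2
      injection hax with hp
      injection hp with hj ha2
      rcases hcase with ⟨hj0, heN'⟩ | ⟨hji, heN0⟩
      · exact (hN'u e heN' a ha).1 ha2
      · exact hji hj
  have h_se0_se1 : ∀ x, ¬(x ∈ se0 v i0 ∧ x ∈ se1 u i0) := by
    intro x hx
    rcases Sym2.mem_iff.mp hx.1 with rfl | rfl <;>
      rcases Sym2.mem_iff.mp hx.2 with h | h
    · injection h with h1; exact absurd h1 (by decide)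
    · exact absurd h (by simp)
    · exact absurd h (by simp)
    · injection h with hp; injection hp with hj hvu; exact hne hvu.symm
  have h_R_R : ∀ E ∈ R, ∀ F ∈ R, E ≠ F → ∀ x, ¬(x ∈ E ∧ x ∈ F) := by
    intro E hE F hF hEF x hx
    obtain ⟨j, e, rfl, hcase⟩ := hRmem E hE
    obtain ⟨j', e', rfl, hcase'⟩ := hRmem F hF
    obtain ⟨a, ha, rfl⟩ := mem_cmap.mp hx.1
    obtain ⟨b, hb, hba⟩ := mem_cmap.mp hx.2
    injection hba with hp
    injection hp with hj' hb'
    rw [hj'] at hcase'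
    rw [hb'] at hb
    have hee' : e ≠ e' := by
      intro h
      rw [h, hj'] at hEF
      exact hEF rfl
    rcases hcase with ⟨hj0, heN'⟩ | ⟨hji, heN0⟩ <;>
      rcases hcase' with ⟨hj0', heN''⟩ | ⟨hji', heN0'⟩
    · exact hN'3 e heN' e' heN'' hee' a ⟨ha, hb⟩
    · exact hji' hj0
    · exact hji hj0'
    · exact hN03 e heN0 e' heN0' hee' a ⟨ha, hb⟩
  refine ⟨insert (se0 v i0) (insert (se1 u i0) R), mem_mset.mpr ⟨?_, ?_, ?_⟩⟩
  · intro E hE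
    rcases Finset.mem_insert.mp hE with rfl | hE'
    · exact hse0
    rcases Finset.mem_insert.mp hE' with rfl | hE''
    · exact hse1
    obtain ⟨j, e, rfl, hcase⟩ := hRmem E hE''
    rcases hcase with ⟨-, heN'⟩ | ⟨-, heN0⟩
    · exact hedge j e (hN'G e heN') (hN'ne e heN')
    · exact hedge j e (hN01 e heN0) (hN0ne e heN0)
  · rw [Finset.card_insert_of_notMem, Finset.card_insert_of_notMem hse1R]
    · rw [hR, Finset.card_union_of_disjoint, Finset.card_image_of_injective _ (cmap_inj i0),
        Finset.card_biUnion]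
      · have hsum : ∀ j ∈ Finset.univ.erase i0, (N0.image (cmap j)).card = n := by
          intro j _
          rw [Finset.card_image_of_injective _ (cmap_inj j), hN02]
        rw [Finset.sum_congr rfl hsum, Finset.sum_const, Finset.card_erase_of_mem
          (Finset.mem_univ i0), Finset.card_univ, Fintype.card_fin, smul_eq_mul, hN'2]
        obtain ⟨d', rfl⟩ : ∃ d', d = d' + 1 := ⟨d - 1, by omega⟩
        obtain ⟨n', rfl⟩ : ∃ n', n = n' + 1 := ⟨n - 1, by omega⟩
        simp only [Nat.add_sub_cancel]
        ring
      · intro j hj j' hj' hjj'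
        rw [Function.onFun, Finset.disjoint_left]
        intro E hEj hEj'
        obtain ⟨e, -, rfl⟩ := Finset.mem_image.mp hEj
        obtain ⟨e', -, heq⟩ := Finset.mem_image.mp hEj'
        exact hjj' (cmap_index_eq heq).symm
      · rw [Finset.disjoint_left]
        intro E hE1 hE2
        obtain ⟨e, -, rfl⟩ := Finset.mem_image.mp hE1
        rw [Finset.mem_biUnion] at hE2
        obtain ⟨j, hj, hE2⟩ := hE2
        obtain ⟨e', -, heq⟩ := Finset.mem_image.mp hE2
        exact Finset.ne_of_mem_erase hj (cmap_index_eq heq.symm).symm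
    · rw [Finset.mem_insert]
      rintro (h | h)
      · exact hse01 h
      · exact hse0R h
  · intro E hE F hF hEF x hx
    rcases Finset.mem_insert.mp hE with rfl | hE' <;>
      [skip; rcases Finset.mem_insert.mp hE' with rfl | hE'']
    · rcases Finset.mem_insert.mp hF with rfl | hF'
      · exact hEF rfl
      · rcases Finset.mem_insert.mp hF' with rfl | hF''
        · exact h_se0_se1 x hx
        · exact h_se0_R F hF'' x hx
    · rcases Finset.mem_insert.mp hF with rfl | hF'
      · exact h_se0_se1 x ⟨hx.2, hx.1⟩
      · rcases Finset.mem_insert.mp hF' with rfl | hF''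
        · exact hEF rfl
        · exact h_se1_R F hF'' x hx
    · rcases Finset.mem_insert.mp hF with rfl | hF'
      · exact h_se0_R E hE'' x ⟨hx.2, hx.1⟩
      · rcases Finset.mem_insert.mp hF' with rfl | hF''
        · exact h_se1_R E hE'' x ⟨hx.2, hx.1⟩
        · exact h_R_R E hE'' F hF'' hEF x hx

end StarPos

-- ## transfer along an equivalence

def transfer {V W : Type*} (G : SimpleGraph V) (φ : V ≃ W) : SimpleGraph W where
  Adj x y := G.Adj (φ.symm x) (φ.symm y)
  symm := ⟨fun _ _ h => G.symm.symm _ _ h⟩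
  loopless := ⟨fun _ h => G.loopless.irrefl _ h⟩

lemma transfer_adj {V W : Type*} {G : SimpleGraph V} {φ : V ≃ W} {x y : W} :
    (transfer G φ).Adj x y ↔ G.Adj (φ.symm x) (φ.symm y) := Iff.rfl

lemma transfer_adj' {V W : Type*} {G : SimpleGraph V} {φ : V ≃ W} {a b : V} :
    G.Adj a b ↔ (transfer G φ).Adj (φ a) (φ b) := by
  rw [transfer_adj, Equiv.symm_apply_apply, Equiv.symm_apply_apply]

lemma transfer_regular {V W : Type*} [Fintype V] [Fintype W] {G : SimpleGraph V} {φ : V ≃ W}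
    {d : ℕ} (hreg : G.IsRegularOfDegree d) : (transfer G φ).IsRegularOfDegree d := by
  intro x
  have hnb : (transfer G φ).neighborFinset x = (G.neighborFinset (φ.symm x)).image φ := by
    ext y
    rw [SimpleGraph.mem_neighborFinset, Finset.mem_image, transfer_adj]
    constructor
    · intro h
      exact ⟨φ.symm y, (SimpleGraph.mem_neighborFinset _ _ _).mpr h, by simp⟩
    · rintro ⟨b, hb, rfl⟩
      rw [SimpleGraph.mem_neighborFinset] at hb
      simpa using hb
  rw [SimpleGraph.degree, hnb, Finset.card_image_of_injective _ φ.injective]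
  exact hreg _

lemma transfer_colorable {V W : Type*} {G : SimpleGraph V} {φ : V ≃ W}
    (h : G.Colorable 2) : (transfer G φ).Colorable 2 := by
  obtain ⟨C⟩ := h
  exact ⟨SimpleGraph.Coloring.mk (fun x => C (φ.symm x)) (fun h => C.valid h)⟩

lemma transfer_deleteVerts_adj {V W : Type*} [Fintype V] [Fintype W] {G : SimpleGraph V} {φ : V ≃ W} {u v a b : V} :
    (deleteVerts G {u,v}).Adj a b ↔
      (deleteVerts (transfer G φ) {φ u, φ v}).Adj (φ a) (φ b) := by
  rw [deleteVerts_adj, deleteVerts_adj, ← transfer_adj']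
  simp only [Set.mem_insert_iff, Set.mem_singleton_iff, Equiv.apply_eq_iff_eq]


lemma endgame {A B m' mn Qc d N : ℕ} (hd1 : 0 < d) (hN : 0 < N)
    (f1 : mn = m' + Qc) (f2 : Qc ^ d ≤ A) (f3 : B ≤ d * (m' * Qc ^ (d-1)))
    (f4 : 0 < m' → 0 < Qc → 0 < B) :
    (A : ℝ) / ((N : ℝ) * (B : ℝ)) ≥
      (1 / ((d : ℝ) * (N : ℝ))) * (1 / ((m' : ℝ) / (mn : ℝ)) - 1) := by
  have hNrpos : (0:ℝ) < (N:ℝ) := by exact_mod_cast hN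
  have hdpos : (0:ℝ) < (d:ℝ) := by exact_mod_cast hd1
  rcases Nat.eq_zero_or_pos m' with hm0 | hmpos
  · refine le_trans ?_ (div_nonneg (Nat.cast_nonneg _) (by positivity))
    rw [hm0]
    push_cast
    rw [zero_div, div_zero, zero_sub]
    have h0 : (0:ℝ) ≤ 1/((d:ℝ)*(N:ℝ)) := by positivity
    nlinarith
  · have hm'pos : (0:ℝ) < (m' : ℝ) := by exact_mod_cast hmpos
    have hm'ne : ((m':ℕ) : ℝ) ≠ 0 := ne_of_gt hm'pos
    have hmn' : ((mn:ℕ) : ℝ) = (m' : ℝ) + (Qc : ℝ) := by exact_mod_cast f1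
    have hRHS : 1/((d:ℝ)*(N:ℝ)) * (1/((m':ℝ)/(mn:ℝ)) - 1)
        = (Qc:ℝ)/((m':ℝ)*((d:ℝ)*(N:ℝ))) := by
      rw [one_div_div, hmn', div_sub_one hm'ne, add_sub_cancel_left,
        one_div_mul_eq_div, div_div]
    rw [hRHS]
    rcases Nat.eq_zero_or_pos Qc with hQ0 | hQpos
    · rw [hQ0]
      push_cast
      rw [zero_div]
      exact div_nonneg (Nat.cast_nonneg _) (by positivity)
    · have hBpos : (0:ℝ) < (B:ℝ) := by exact_mod_cast f4 hmpos hQpos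
      have hQnn : (0:ℝ) ≤ (Qc:ℝ) := Nat.cast_nonneg _
      rw [ge_iff_le, div_le_div_iff₀ (by positivity) (by positivity)]
      have f2' : ((Qc:ℝ))^d ≤ (A:ℝ) := by exact_mod_cast f2
      have f3' : (B:ℝ) ≤ (d:ℝ) * ((m':ℝ) * (Qc:ℝ)^(d-1)) := by exact_mod_cast f3
      have hpow : (Qc:ℝ)^(d-1) * (Qc:ℝ) = (Qc:ℝ)^d := by
        rw [← pow_succ]
        congr 1
        omega
      calc (Qc:ℝ) * ((N:ℝ) * (B:ℝ))
          ≤ (Qc:ℝ) * ((N:ℝ) * ((d:ℝ) * ((m':ℝ) * (Qc:ℝ)^(d-1)))) := by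
            apply mul_le_mul_of_nonneg_left _ hQnn
            apply mul_le_mul_of_nonneg_left f3' (le_of_lt hNrpos)
        _ = ((m':ℝ)*((d:ℝ)*(N:ℝ))) * ((Qc:ℝ)^(d-1) * (Qc:ℝ)) := by ring
        _ = ((m':ℝ)*((d:ℝ)*(N:ℝ))) * (Qc:ℝ)^d := by rw [hpow]
        _ ≤ ((m':ℝ)*((d:ℝ)*(N:ℝ))) * (A:ℝ) := by
            apply mul_le_mul_of_nonneg_left f2' (by positivity)
        _ = (A:ℝ) * ((m':ℝ)*((d:ℝ)*(N:ℝ))) := by ring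

-- ## main theorem

theorem main {V : Type*} [Fintype V] (G : SimpleGraph V) (d n : ℕ)
    (hV : Fintype.card V = 2 * n)
    (hreg : G.IsRegularOfDegree d) (hbip : G.Colorable 2)
    (u v : V) (huv : G.Adj u v) (hpm : 0 < numMatchings G n) :
    ∃ (W : Type) (instW : Fintype W) (H : SimpleGraph W),
      @Fintype.card W instW = 2 * (d * n + 1) ∧
      H.IsRegularOfDegree d ∧ H.Colorable 2 ∧
      (@numMatchings W instW H (d * n) : ℝ) /
          (((d * n + 1 : ℕ) : ℝ) * (@numMatchings W instW H (d * n + 1) : ℝ)) ≥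
        (1 / ((d : ℝ) * ((d * n + 1 : ℕ) : ℝ))) *
          (1 / ((numMatchings (deleteVerts G {u, v}) (n - 1) : ℝ) /
              (numMatchings G n : ℝ)) - 1) := by
  classical
  have hne : u ≠ v := G.ne_of_adj huv
  have hd1 : 0 < d := by
    have h := hreg u
    have hv : v ∈ G.neighborFinset u := by
      rw [SimpleGraph.mem_neighborFinset]; exact huv
    calc 0 < (G.neighborFinset u).card := Finset.card_pos.mpr ⟨v, hv⟩
    _ = d := h
  have hn1 : 1 ≤ n := by
    have : 0 < Fintype.card V := Fintype.card_pos_iff.mpr ⟨u⟩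
    omega
  set φ : V ≃ Fin (2*n) := Fintype.equivFinOfCardEq hV with hφ
  set G' : SimpleGraph (Fin (2*n)) := transfer G φ with hG'
  set u' : Fin (2*n) := φ u with hu'
  set v' : Fin (2*n) := φ v with hv'
  have huv' : G'.Adj u' v' := transfer_adj'.mp huv
  have hne' : u' ≠ v' := G'.ne_of_adj huv'
  have hreg' : G'.IsRegularOfDegree d := transfer_regular hreg
  have hbip' : G'.Colorable 2 := transfer_colorable hbip
  have hVn : Fintype.card (Fin (2*n)) = 2*n := Fintype.card_fin _
  -- transfer of matching counts
  have hm_eq : numMatchings G n = numMatchings G' n :=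
    numMatchings_eq_of_equiv φ (fun a b => transfer_adj') n
  have hdel_eq : numMatchings (deleteVerts G {u,v}) (n-1)
      = numMatchings (deleteVerts G' {u',v'}) (n-1) :=
    numMatchings_eq_of_equiv φ (fun a b => transfer_deleteVerts_adj) (n-1)
  -- the gadget graph
  refine ⟨(Fin d × Fin (2*n)) ⊕ Fin 2, inferInstance, gstar G' u' v' d,
    gstar_card hVn, gstar_regular hreg' huv', gstar_colorable hbip' huv', ?_⟩
  have f1 := card_mset_split (G := G') (u := u') (v := v') huv' hn1
  have f2 := star_lower (G := G') (u := u') (v := v') (d := d) (n := n)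
  have f3 := star_upper (G := G') (u := u') (v := v') (d := d) (n := n) hVn hne'
  have f4 := fun h1 h2 => Finset.card_pos.mpr
    (star_pos (G := G') (u := u') (v := v') (d := d) (n := n) hne' hn1 hd1
      (Finset.card_pos.mp h1) (Finset.card_pos.mp h2))
  rw [hdel_eq, hm_eq]
  simp only [numMatchings_eq]
  exact endgame hd1 (by omega) f1 f2 f3 f4
end Aux

theorem stmt18 {V : Type*} [Fintype V] (G : SimpleGraph V) (d n : ℕ)
    (hV : Fintype.card V = 2 * n)
    (hreg : G.IsRegularOfDegree d) (hbip : G.Colorable 2)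
    (u v : V) (huv : G.Adj u v) (hpm : 0 < numMatchings G n) :
    ∃ (W : Type) (instW : Fintype W) (H : SimpleGraph W),
      @Fintype.card W instW = 2 * (d * n + 1) ∧
      H.IsRegularOfDegree d ∧ H.Colorable 2 ∧
      (@numMatchings W instW H (d * n) : ℝ) /
          (((d * n + 1 : ℕ) : ℝ) * (@numMatchings W instW H (d * n + 1) : ℝ)) ≥
        (1 / ((d : ℝ) * ((d * n + 1 : ℕ) : ℝ))) *
          (1 / ((numMatchings (deleteVerts G {u, v}) (n - 1) : ℝ) /
              (numMatchings G n : ℝ)) - 1) := by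
  exact Aux.main G d n hV hreg hbip u v huv hpm
end
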